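/- arXiv:2008.00771 — 5 statements merged into one kernel-verified Lean document; each statement's English description precedes it below -/
import Mathlib

section
/- Let C be a nonnegative, almost surely finite random variable independent of (Z_i)_{i∈ℤ}, let q ∈ ℕ and δ > 0. Then lim_{n→∞} P( there exist k ∈ {1,…,n} and l ∈ {k−q,…,k+q} with l ≠ k such that C·|Z_k| > δ·a_n and C·|Z_l| > δ·a_n ) = 0. -/
open MeasureTheory ProbabilityTheory Filter

/-- For C nonnegative, a.s. finite, independent of (Z_i), q ∈ ℕ and δ > 0,
the probability that there exist k ∈ {1,…,n} and l ∈ {k-q,…,k+q}, l ≠ k, with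
C·|Z_k| > δ·a_n and C·|Z_l| > δ·a_n tends to 0 as n → ∞. -/
theorem stmt3
    {Ω : Type*} [MeasurableSpace Ω] (P : Measure Ω) [IsProbabilityMeasure P]
    (Z : ℤ → Ω → ℝ) (hZmeas : ∀ i, Measurable (Z i))
    (hZindep : iIndepFun Z P)
    (hZident : ∀ i, IdentDistrib (Z i) (Z 1) P P)
    (α : ℝ) (hα : 0 < α) (L : ℝ → ℝ)
    (hreg : ∀ x > (0 : ℝ), (P {ω | x < |Z 1 ω|}).toReal = x ^ (-α) * L x)
    (hL : ∀ l > (0 : ℝ), Tendsto (fun x => L (l * x) / L x) atTop (nhds 1))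
    (a : ℕ → ℝ) (ha : ∀ n, 0 < a n)
    (hna : Tendsto (fun n : ℕ => (n : ℝ) * (P {ω | a n < |Z 1 ω|}).toReal) atTop (nhds 1))
    (C : Ω → ℝ) (hCmeas : Measurable C) (hCnonneg : ∀ ω, 0 ≤ C ω)
    (hCZindep : Indep (MeasurableSpace.comap C Real.measurableSpace)
      (⨆ i, MeasurableSpace.comap (Z i) Real.measurableSpace) P)
    (q : ℕ) (δ : ℝ) (hδ : 0 < δ) :
    Tendsto
      (fun n : ℕ =>
        (P {ω | ∃ k ∈ Finset.Icc (1 : ℤ) (n : ℤ), ∃ l ∈ Finset.Icc (k - q) (k + q),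
            l ≠ k ∧ δ * a n < C ω * |Z k ω| ∧ δ * a n < C ω * |Z l ω|}).toReal)
      atTop (nhds 0) := by
  -- Notation
  set Pn : ℕ → ℝ := fun n => (P {ω | a n < |Z 1 ω|}).toReal with hPndef
  -- Positivity of the tail probability at every positive level
  have hpos : ∀ x > (0 : ℝ), 0 < (P {ω | x < |Z 1 ω|}).toReal := by
    intro B hB
    by_contra h
    push_neg at h
    have hB0 : (P {ω | B < |Z 1 ω|}).toReal = 0 := le_antisymm h ENNReal.toReal_nonneg
    have hBmeas : P {ω | B < |Z 1 ω|} = 0 := by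
      rcases (ENNReal.toReal_eq_zero_iff _).1 hB0 with h' | h'
      · exact h'
      · exact absurd h' (measure_ne_top P _)
    have hz : ∀ y, B ≤ y → L y = 0 := by
      intro y hy
      have hy0 : (0 : ℝ) < y := lt_of_lt_of_le hB hy
      have hmono : P {ω | y < |Z 1 ω|} ≤ P {ω | B < |Z 1 ω|} :=
        measure_mono (fun ω hω => lt_of_le_of_lt hy hω)
      have hy0' : P {ω | y < |Z 1 ω|} = 0 := le_antisymm (hBmeas ▸ hmono) zero_le
      have := hreg y hy0
      rw [hy0'] at this
      simp only [ENNReal.toReal_zero] at this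
      have hpow : (0 : ℝ) < y ^ (-α) := Real.rpow_pos_of_pos hy0 _
      nlinarith [this.symm]
    have h2 : Tendsto (fun x => L (2 * x) / L x) atTop (nhds 0) := by
      refine Tendsto.congr' ?_ tendsto_const_nhds
      filter_upwards [eventually_ge_atTop (max B 1)] with x hx
      have hxB : B ≤ x := le_trans (le_max_left _ _) hx
      rw [hz x hxB, div_zero]
    have h01 : (1:ℝ) = 0 := tendsto_nhds_unique (hL 2 (by norm_num)) h2
    norm_num at h01
  have hn_inv : Tendsto (fun n : ℕ => ((n : ℝ))⁻¹) atTop (nhds 0) :=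
    tendsto_inv_atTop_zero.comp tendsto_natCast_atTop_atTop
  -- Pn → 0
  have hPn0 : Tendsto Pn atTop (nhds 0) := by
    have h := hna.mul hn_inv
    rw [mul_zero] at h
    refine h.congr' ?_
    filter_upwards [eventually_ge_atTop 1] with n hn
    have hne : ((n : ℝ)) ≠ 0 := by positivity
    field_simp
    rfl
  -- a n → ∞
  have ha_top : Tendsto a atTop atTop := by
    rw [tendsto_atTop]
    intro B
    set B' := max B 1 with hB'def
    have hB' : (0 : ℝ) < B' := lt_of_lt_of_le one_pos (le_max_right _ _)
    have hp := hpos B' hB'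
    filter_upwards [hPn0.eventually_lt_const hp] with n hn
    by_contra hcon
    push_neg at hcon
    have hsub : {ω | B' < |Z 1 ω|} ⊆ {ω | a n < |Z 1 ω|} := by
      intro ω hω
      have : a n < B' := lt_of_lt_of_le hcon (le_max_left _ _)
      exact lt_trans this hω
    have : (P {ω | B' < |Z 1 ω|}).toReal ≤ Pn n :=
      ENNReal.toReal_mono (measure_ne_top P _) (measure_mono hsub)
    linarith
  -- L (a n) > 0
  have hLpos : ∀ n, 0 < L (a n) := by
    intro n
    have h1 := hreg (a n) (ha n)
    have h2 := hpos (a n) (ha n)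
    rw [h1] at h2
    nlinarith [Real.rpow_pos_of_pos (ha n) (-α)]
  -- key limit: n * (tail at c * a n)^2 → 0
  have key : ∀ c > (0 : ℝ), Tendsto
      (fun n : ℕ => (n : ℝ) * ((P {ω | c * a n < |Z 1 ω|}).toReal) ^ 2) atTop (nhds 0) := by
    intro c hc
    set rn : ℕ → ℝ := fun n => (P {ω | c * a n < |Z 1 ω|}).toReal with hrndef
    have hLratio : Tendsto (fun n => L (c * a n) / L (a n)) atTop (nhds 1) :=
      (hL c hc).comp ha_top
    have hrn_eq : ∀ n : ℕ, (n : ℝ) * rn n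
        = c ^ (-α) * ((n : ℝ) * Pn n) * (L (c * a n) / L (a n)) := by
      intro n
      have hca : (0 : ℝ) < c * a n := mul_pos hc (ha n)
      have h1 := hreg (c * a n) hca
      have h2 := hreg (a n) (ha n)
      have h3 : L (a n) ≠ 0 := (hLpos n).ne'
      simp only [hrndef, hPndef, h1, h2]
      rw [Real.mul_rpow hc.le (ha n).le]
      field_simp
    have hmul : Tendsto (fun n : ℕ => c ^ (-α) * ((n : ℝ) * Pn n) * (L (c * a n) / L (a n)))
        atTop (nhds (c ^ (-α) * 1 * 1)) :=
      (tendsto_const_nhds.mul hna).mul hLratio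
    have hnrn : Tendsto (fun n : ℕ => (n : ℝ) * rn n) atTop (nhds (c ^ (-α))) := by
      have := hmul.congr (fun n => (hrn_eq n).symm)
      simpa using this
    have hrn0 : Tendsto rn atTop (nhds 0) := by
      have h := hnrn.mul hn_inv
      rw [mul_zero] at h
      refine h.congr' ?_
      filter_upwards [eventually_ge_atTop 1] with n hn
      have hne : ((n : ℝ)) ≠ 0 := by positivity
      field_simp
    have h := hnrn.mul hrn0
    rw [mul_zero] at h
    exact h.congr (fun n => by ring)
  -- the union bound
  have bound : ∀ (M : ℝ), 0 < M → ∀ n : ℕ,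
      (P {ω | ∃ k ∈ Finset.Icc (1 : ℤ) (n : ℤ), ∃ l ∈ Finset.Icc (k - q) (k + q),
          l ≠ k ∧ δ * a n < C ω * |Z k ω| ∧ δ * a n < C ω * |Z l ω|}).toReal
      ≤ (P {ω | M < C ω}).toReal
        + (n : ℝ) * (2 * q) * ((P {ω | δ / M * a n < |Z 1 ω|}).toReal) ^ 2 := by
    intro M hM n
    set s : ℝ := δ / M * a n with hsdef
    set S : Set ℝ := {x : ℝ | s < |x|} with hSdef
    have hS : MeasurableSet S := measurableSet_lt measurable_const measurable_id.abs
    set p : ENNReal := P {ω | s < |Z 1 ω|} with hpdef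
    have hpre : ∀ i : ℤ, Z i ⁻¹' S = {ω | s < |Z i ω|} := fun i => rfl
    -- inclusion
    have hsub : {ω | ∃ k ∈ Finset.Icc (1 : ℤ) (n : ℤ), ∃ l ∈ Finset.Icc (k - q) (k + q),
          l ≠ k ∧ δ * a n < C ω * |Z k ω| ∧ δ * a n < C ω * |Z l ω|}
        ⊆ {ω | M < C ω} ∪ ⋃ k ∈ Finset.Icc (1 : ℤ) (n : ℤ),
            ⋃ l ∈ (Finset.Icc (k - q) (k + q)).erase k, (Z k ⁻¹' S ∩ Z l ⁻¹' S) := by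
      rintro ω ⟨k, hk, l, hl, hlk, h1, h2⟩
      by_cases hC : M < C ω
      · exact Or.inl hC
      · push_neg at hC
        right
        have habs : ∀ i : ℤ, δ * a n < C ω * |Z i ω| → ω ∈ Z i ⁻¹' S := by
          intro i hi
          have h' : δ * a n < M * |Z i ω| :=
            lt_of_lt_of_le hi (mul_le_mul_of_nonneg_right hC (abs_nonneg _))
          have : s < |Z i ω| := by
            rw [hsdef, div_mul_eq_mul_div, div_lt_iff₀ hM]
            linarith [h']
          exact this
        simp only [Set.mem_iUnion, Set.mem_inter_iff]
        exact ⟨k, hk, l, Finset.mem_erase.2 ⟨hlk, hl⟩, habs k h1, habs l h2⟩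
    have hterm : ∀ k : ℤ, ∀ l ∈ (Finset.Icc (k - q) (k + q)).erase k,
        P (Z k ⁻¹' S ∩ Z l ⁻¹' S) = p * p := by
      intro k l hl
      obtain ⟨hlk, _⟩ := Finset.mem_erase.1 hl
      have hindep : IndepFun (Z k) (Z l) P := hZindep.indepFun (Ne.symm hlk)
      rw [hindep.measure_inter_preimage_eq_mul S S hS hS,
        (hZident k).measure_mem_eq hS, (hZident l).measure_mem_eq hS]
      rfl
    have hcard_erase : ∀ k : ℤ, ((Finset.Icc (k - q) (k + q)).erase k).card = 2 * q := by
      intro k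
      have hk_mem : k ∈ Finset.Icc (k - q) (k + q) :=
        Finset.mem_Icc.2 ⟨by linarith [Int.ofNat_nonneg q], by linarith [Int.ofNat_nonneg q]⟩
      rw [Finset.card_erase_of_mem hk_mem, Int.card_Icc]
      have : (k + (q : ℤ) + 1 - (k - (q : ℤ))) = 2 * q + 1 := by ring
      rw [this]
      omega
    have hcard_Icc : (Finset.Icc (1 : ℤ) (n : ℤ)).card = n := by
      rw [Int.card_Icc]
      omega
    have hP : P {ω | ∃ k ∈ Finset.Icc (1 : ℤ) (n : ℤ), ∃ l ∈ Finset.Icc (k - q) (k + q),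
          l ≠ k ∧ δ * a n < C ω * |Z k ω| ∧ δ * a n < C ω * |Z l ω|}
        ≤ P {ω | M < C ω} + (n : ENNReal) * ((2 * q : ℕ) : ENNReal) * (p * p) := by
      refine le_trans (measure_mono hsub) (le_trans (measure_union_le _ _) ?_)
      refine add_le_add_right ?_ _
      refine le_trans (measure_biUnion_finset_le _ _) ?_
      have hinner : ∀ k ∈ Finset.Icc (1 : ℤ) (n : ℤ),
          P (⋃ l ∈ (Finset.Icc (k - q) (k + q)).erase k, (Z k ⁻¹' S ∩ Z l ⁻¹' S))
          ≤ ((2 * q : ℕ) : ENNReal) * (p * p) := by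
        intro k _
        refine le_trans (measure_biUnion_finset_le _ _) ?_
        rw [Finset.sum_congr rfl (hterm k), Finset.sum_const, hcard_erase k, nsmul_eq_mul]
      refine le_trans (Finset.sum_le_sum hinner) ?_
      rw [Finset.sum_const, hcard_Icc, nsmul_eq_mul, ← mul_assoc]
    have hfin : P {ω | M < C ω} + (n : ENNReal) * ((2 * q : ℕ) : ENNReal) * (p * p) ≠ ⊤ := by
      refine ENNReal.add_ne_top.2 ⟨measure_ne_top P _, ?_⟩
      exact ENNReal.mul_ne_top (ENNReal.mul_ne_top (ENNReal.natCast_ne_top n)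
        (ENNReal.natCast_ne_top _)) (ENNReal.mul_ne_top (measure_ne_top P _) (measure_ne_top P _))
    have := ENNReal.toReal_mono hfin hP
    refine le_trans this (le_of_eq ?_)
    rw [ENNReal.toReal_add (measure_ne_top P _) (by
      exact ENNReal.mul_ne_top (ENNReal.mul_ne_top (ENNReal.natCast_ne_top n)
        (ENNReal.natCast_ne_top _)) (ENNReal.mul_ne_top (measure_ne_top P _) (measure_ne_top P _))),
      ENNReal.toReal_mul, ENNReal.toReal_mul, ENNReal.toReal_mul]
    simp only [ENNReal.toReal_natCast]
    push_cast
    rw [hpdef]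
    ring
  -- choose M : tail of C
  have hCM : Tendsto (fun M : ℕ => (P {ω | (M : ℝ) < C ω}).toReal) atTop (nhds 0) := by
    have hmeas : ∀ M : ℕ, NullMeasurableSet {ω | (M : ℝ) < C ω} P :=
      fun M => (measurableSet_lt measurable_const hCmeas).nullMeasurableSet
    have hanti : Antitone fun M : ℕ => {ω | (M : ℝ) < C ω} := by
      intro i j hij ω hω
      simp only [Set.mem_setOf_eq] at hω ⊢
      exact lt_of_le_of_lt (Nat.cast_le.mpr hij) hω
    have h := tendsto_measure_iInter_atTop (μ := P) hmeas hanti ⟨0, measure_ne_top P _⟩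
    have hempty : (⋂ M : ℕ, {ω | (M : ℝ) < C ω}) = ∅ := by
      ext ω
      simp only [Set.mem_iInter, Set.mem_setOf_eq, Set.mem_empty_iff_false, iff_false, not_forall,
        not_lt]
      obtain ⟨M, hMω⟩ := exists_nat_gt (C ω)
      exact ⟨M, hMω.le⟩
    rw [hempty] at h
    simp only [measure_empty] at h
    have := (ENNReal.tendsto_toReal (by simp)).comp h
    exact this
  -- final assembly
  rw [NormedAddCommGroup.tendsto_nhds_zero]
  intro ε hε
  obtain ⟨M, hMsmall, hM1⟩ :=
    ((hCM.eventually_lt_const (by linarith : (0:ℝ) < ε / 2)).and (eventually_ge_atTop 1)).exists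
  have hMpos : (0 : ℝ) < (M : ℝ) := by exact_mod_cast hM1
  have hc : (0 : ℝ) < δ / M := div_pos hδ hMpos
  have hkey := key (δ / M) hc
  have hkey2 : Tendsto (fun n : ℕ =>
      (n : ℝ) * (2 * q) * ((P {ω | δ / M * a n < |Z 1 ω|}).toReal) ^ 2) atTop (nhds 0) := by
    have := hkey.const_mul ((2 : ℝ) * q)
    rw [mul_zero] at this
    exact this.congr (fun n => by ring)
  filter_upwards [hkey2.eventually_lt_const (by linarith : (0:ℝ) < ε / 2)] with n hn
  have hb := bound (M : ℝ) hMpos n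
  have hnn : (0 : ℝ) ≤ (P {ω | ∃ k ∈ Finset.Icc (1 : ℤ) (n : ℤ),
      ∃ l ∈ Finset.Icc (k - q) (k + q),
      l ≠ k ∧ δ * a n < C ω * |Z k ω| ∧ δ * a n < C ω * |Z l ω|}).toReal :=
    ENNReal.toReal_nonneg
  rw [Real.norm_eq_abs, abs_of_nonneg hnn]
  linarith
end

section
/- Let C be a nonnegative, almost surely finite random variable independent of (Z_i)_{i∈ℤ}, let q ∈ ℕ and δ > 0. Then lim_{n→∞} P( there exist k ∈ {1,…,n}, j ∈ {1,…,n} \ {k,…,k+q}, l₁ ∈ {0,…,q} and l ∈ {0,…,q} with l ≠ l₁ such that C·|Z_k| > δ·a_n, C·|Z_{j−l₁}| > δ·a_n and C·|Z_{j−l}| > δ·a_n ) = 0. -/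
open MeasureTheory ProbabilityTheory Filter
open scoped ENNReal

lemma aux_Lpos {Ω : Type*} [MeasurableSpace Ω] (P : Measure Ω) [IsProbabilityMeasure P]
    (W : Ω → ℝ) (α : ℝ) (L : ℝ → ℝ)
    (hreg : ∀ x > (0:ℝ), (P {ω | x < |W ω|}).toReal = x ^ (-α) * L x)
    (hL : ∀ l > (0:ℝ), Tendsto (fun x => L (l * x) / L x) atTop (nhds 1)) :
    ∀ x > (0:ℝ), 0 < L x := by
  by_contra h
  push_neg at h
  obtain ⟨x₀, hx₀, hLx₀⟩ := h
  have hPnn : ∀ x > (0:ℝ), 0 ≤ L x := by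
    intro x hx
    have h1 := hreg x hx
    have h2 : (0:ℝ) < x ^ (-α) := Real.rpow_pos_of_pos hx _
    nlinarith [ENNReal.toReal_nonneg (a := P {ω | x < |W ω|})]
  have hx0 : L x₀ = 0 := le_antisymm hLx₀ (hPnn x₀ hx₀)
  have hP0 : P {ω | x₀ < |W ω|} = 0 := by
    have h1 : (P {ω | x₀ < |W ω|}).toReal = 0 := by rw [hreg x₀ hx₀, hx0, mul_zero]
    exact ((ENNReal.toReal_eq_zero_iff _).1 h1).resolve_right (measure_ne_top P _)
  have hLz : ∀ x ≥ x₀, L x = 0 := by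
    intro x hx
    have hxpos : 0 < x := lt_of_lt_of_le hx₀ hx
    have hsub : {ω | x < |W ω|} ⊆ {ω | x₀ < |W ω|} := fun ω hω => lt_of_le_of_lt hx hω
    have hP0' : P {ω | x < |W ω|} = 0 :=
      le_antisymm (hP0 ▸ measure_mono hsub) (zero_le)
    have h2 : x ^ (-α) * L x = 0 := by rw [← hreg x hxpos, hP0', ENNReal.toReal_zero]
    have h3 : (0:ℝ) < x ^ (-α) := Real.rpow_pos_of_pos hxpos _
    nlinarith
  have h0 : Tendsto (fun x => L (2 * x) / L x) atTop (nhds 0) := by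
    apply Tendsto.congr' _ tendsto_const_nhds
    filter_upwards [eventually_ge_atTop x₀] with x hx
    rw [hLz x hx, div_zero]
  have := tendsto_nhds_unique (hL 2 (by norm_num)) h0
  norm_num at this

lemma aux_aTop {Ω : Type*} [MeasurableSpace Ω] (P : Measure Ω) [IsProbabilityMeasure P]
    (W : Ω → ℝ) (α : ℝ) (L : ℝ → ℝ)
    (hreg : ∀ x > (0:ℝ), (P {ω | x < |W ω|}).toReal = x ^ (-α) * L x)
    (hLpos : ∀ x > (0:ℝ), 0 < L x)
    (a : ℕ → ℝ) (ha : ∀ n, 0 < a n)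
    (hna : Tendsto (fun n : ℕ => (n : ℝ) * (P {ω | a n < |W ω|}).toReal) atTop (nhds 1)) :
    Tendsto a atTop atTop := by
  rw [tendsto_atTop]
  intro b
  set B := max b 1 with hBdef
  have hB : (0:ℝ) < B := lt_of_lt_of_le one_pos (le_max_right _ _)
  have hpB : 0 < (P {ω | B < |W ω|}).toReal := by
    rw [hreg B hB]
    exact mul_pos (Real.rpow_pos_of_pos hB _) (hLpos B hB)
  have h1 : ∀ᶠ n : ℕ in atTop, (n:ℝ) * (P {ω | a n < |W ω|}).toReal < 2 :=
    hna.eventually (gt_mem_nhds (by norm_num))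
  have h2 : ∀ᶠ n : ℕ in atTop, (2:ℝ) ≤ (n:ℝ) * (P {ω | B < |W ω|}).toReal := by
    have := (tendsto_natCast_atTop_atTop (R := ℝ)).atTop_mul_const hpB
    exact this.eventually_ge_atTop 2
  filter_upwards [h1, h2] with n hn1 hn2
  have hBle : B ≤ a n := by
    by_contra hab
    push_neg at hab
    have hsub0 : {ω | B < |W ω|} ⊆ {ω | a n < |W ω|} := fun ω hω => lt_trans hab hω
    have hmono0 : (P {ω | B < |W ω|}).toReal ≤ (P {ω | a n < |W ω|}).toReal :=
      ENNReal.toReal_mono (measure_ne_top P _) (measure_mono hsub0)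
    have h3 : (n:ℝ) * (P {ω | B < |W ω|}).toReal ≤ (n:ℝ) * (P {ω | a n < |W ω|}).toReal :=
      mul_le_mul_of_nonneg_left hmono0 (Nat.cast_nonneg n)
    linarith
  linarith [le_max_left b 1]

lemma aux_key {Ω : Type*} [MeasurableSpace Ω] (P : Measure Ω) [IsProbabilityMeasure P]
    (W : Ω → ℝ) (α : ℝ) (L : ℝ → ℝ)
    (hreg : ∀ x > (0:ℝ), (P {ω | x < |W ω|}).toReal = x ^ (-α) * L x)
    (hL : ∀ l > (0:ℝ), Tendsto (fun x => L (l * x) / L x) atTop (nhds 1))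
    (hLpos : ∀ x > (0:ℝ), 0 < L x)
    (a : ℕ → ℝ) (ha : ∀ n, 0 < a n) (haT : Tendsto a atTop atTop)
    (hna : Tendsto (fun n : ℕ => (n : ℝ) * (P {ω | a n < |W ω|}).toReal) atTop (nhds 1))
    (c : ℝ) (hc : 0 < c) :
    Tendsto (fun n : ℕ => (n : ℝ) * (P {ω | c * a n < |W ω|}).toReal) atTop
      (nhds (c ^ (-α))) := by
  have hLc : Tendsto (fun n : ℕ => L (c * a n) / L (a n)) atTop (nhds 1) :=
    (hL c hc).comp haT
  have heq : ∀ n : ℕ, (n:ℝ) * (P {ω | c * a n < |W ω|}).toReal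
      = c ^ (-α) * (((n:ℝ) * (P {ω | a n < |W ω|}).toReal) * (L (c * a n) / L (a n))) := by
    intro n
    rw [hreg _ (mul_pos hc (ha n)), hreg _ (ha n),
      Real.mul_rpow hc.le (ha n).le]
    have hLa : L (a n) ≠ 0 := (hLpos _ (ha n)).ne'
    field_simp
  have h := (hna.mul hLc).const_mul (c ^ (-α))
  rw [mul_one, mul_one] at h
  exact h.congr fun n => (heq n).symm


lemma aux_bound {Ω : Type*} [MeasurableSpace Ω] (P : Measure Ω) [IsProbabilityMeasure P]
    (Z : ℤ → Ω → ℝ)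
    (hZindep : iIndepFun Z P)
    (hZident : ∀ i, IdentDistrib (Z i) (Z 1) P P)
    (C : Ω → ℝ) (q : ℕ) (δ : ℝ) (an : ℝ) (M : ℝ) (hM : 0 < M) (n : ℕ) :
    (P {ω | ∃ k ∈ Finset.Icc (1 : ℤ) (n : ℤ),
        ∃ j ∈ Finset.Icc (1 : ℤ) (n : ℤ), j ∉ Finset.Icc k (k + q) ∧
        ∃ l₁ ∈ Finset.Icc (0 : ℤ) (q : ℤ), ∃ l ∈ Finset.Icc (0 : ℤ) (q : ℤ),
        l ≠ l₁ ∧ δ * an < C ω * |Z k ω| ∧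
        δ * an < C ω * |Z (j - l₁) ω| ∧ δ * an < C ω * |Z (j - l) ω|}).toReal
      ≤ (P {ω | M < C ω}).toReal
        + (n:ℝ)^2 * ((q:ℝ)+1)^2 * ((P {ω | δ / M * an < |Z 1 ω|}).toReal)^3 := by
  set t := δ / M * an with htdef
  set s : ℤ → Set Ω := fun i => {ω | t < |Z i ω|} with hsdef
  set A : Set Ω := {ω | M < C ω} with hAdef
  set S : Finset (ℤ × ℤ × ℤ × ℤ) :=
    (Finset.Icc (1:ℤ) (n:ℤ) ×ˢ Finset.Icc (1:ℤ) (n:ℤ) ×ˢ Finset.Icc (0:ℤ) (q:ℤ)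
      ×ˢ Finset.Icc (0:ℤ) (q:ℤ)).filter
      (fun x => x.2.1 ∉ Finset.Icc x.1 (x.1 + (q:ℤ)) ∧ x.2.2.2 ≠ x.2.2.1) with hSdef
  set T : ℤ × ℤ × ℤ × ℤ → Set Ω :=
    fun x => s x.1 ∩ s (x.2.1 - x.2.2.1) ∩ s (x.2.1 - x.2.2.2) with hTdef
  have hsub : {ω | ∃ k ∈ Finset.Icc (1 : ℤ) (n : ℤ),
        ∃ j ∈ Finset.Icc (1 : ℤ) (n : ℤ), j ∉ Finset.Icc k (k + q) ∧
        ∃ l₁ ∈ Finset.Icc (0 : ℤ) (q : ℤ), ∃ l ∈ Finset.Icc (0 : ℤ) (q : ℤ),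
        l ≠ l₁ ∧ δ * an < C ω * |Z k ω| ∧
        δ * an < C ω * |Z (j - l₁) ω| ∧ δ * an < C ω * |Z (j - l) ω|}
      ⊆ A ∪ ⋃ x ∈ S, T x := by
    rintro ω ⟨k, hk, j, hj, hjk, l₁, hl₁, l, hl, hne, h1, h2, h3⟩
    by_cases hCM : M < C ω
    · exact Or.inl hCM
    · push_neg at hCM
      have step : ∀ i, δ * an < C ω * |Z i ω| → ω ∈ s i := by
        intro i h
        have habs : C ω * |Z i ω| ≤ M * |Z i ω| := by nlinarith [abs_nonneg (Z i ω)]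
        show t < |Z i ω|
        rw [htdef, div_mul_eq_mul_div, div_lt_iff₀ hM]
        nlinarith [abs_nonneg (Z i ω)]
      refine Or.inr (Set.mem_biUnion (?_ : (k, j, l₁, l) ∈ S) ?_)
      · simp only [hSdef, Finset.mem_filter, Finset.mem_product]
        exact ⟨⟨hk, hj, hl₁, hl⟩, hjk, hne⟩
      · exact ⟨⟨step _ h1, step _ h2⟩, step _ h3⟩
  have hmeasR : MeasurableSet {x : ℝ | t < |x|} :=
    measurableSet_lt measurable_const measurable_abs
  have hmeas' : ∀ (i : ℤ), MeasurableSet[Real.measurableSpace.comap (Z i)] (s i) :=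
    fun i => ⟨{x : ℝ | t < |x|}, hmeasR, rfl⟩
  have hPs : ∀ i : ℤ, P (s i) = P (s 1) := fun i => (hZident i).measure_mem_eq hmeasR
  have hT : ∀ x ∈ S, P (T x) = P (s 1) ^ 3 := by
    rintro ⟨k, j, l₁, l⟩ hx
    simp only [hSdef, Finset.mem_filter, Finset.mem_product] at hx
    obtain ⟨⟨hk, hj, hl₁, hl⟩, hjk, hne⟩ := hx
    rw [Finset.mem_Icc] at hk hj hl₁ hl
    simp only [Finset.mem_Icc] at hjk
    have d1 : k ≠ j - l₁ := by omega
    have d2 : k ≠ j - l := by omega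
    have d3 : j - l₁ ≠ j - l := by omega
    have hprod := hZindep.meas_biInter (S := ({k, j - l₁, j - l} : Finset ℤ)) (s := s)
      (fun i _ => hmeas' i)
    have hset : (⋂ i ∈ ({k, j - l₁, j - l} : Finset ℤ), s i) = T (k, j, l₁, l) := by
      simp only [Finset.set_biInter_insert, Finset.set_biInter_singleton, hTdef]
      rw [Set.inter_assoc]
    have hprod2 : ∏ i ∈ ({k, j - l₁, j - l} : Finset ℤ), P (s i)
        = P (s k) * (P (s (j - l₁)) * P (s (j - l))) := by
      rw [Finset.prod_insert (by simp [d1, d2]), Finset.prod_insert (by simp [d3]),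
        Finset.prod_singleton]
    rw [hset, hprod2] at hprod
    rw [hprod, hPs k, hPs (j - l₁), hPs (j - l)]
    ring
  have h1 : P {ω | ∃ k ∈ Finset.Icc (1 : ℤ) (n : ℤ),
        ∃ j ∈ Finset.Icc (1 : ℤ) (n : ℤ), j ∉ Finset.Icc k (k + q) ∧
        ∃ l₁ ∈ Finset.Icc (0 : ℤ) (q : ℤ), ∃ l ∈ Finset.Icc (0 : ℤ) (q : ℤ),
        l ≠ l₁ ∧ δ * an < C ω * |Z k ω| ∧
        δ * an < C ω * |Z (j - l₁) ω| ∧ δ * an < C ω * |Z (j - l) ω|}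
      ≤ P A + ∑ x ∈ S, P (T x) :=
    (measure_mono hsub).trans ((measure_union_le _ _).trans
      (add_le_add_right (measure_biUnion_finset_le S T) _))
  have h2 : ∑ x ∈ S, P (T x) ≤ S.card • P (s 1) ^ 3 :=
    Finset.sum_le_card_nsmul S _ _ (fun x hx => le_of_eq (hT x hx))
  have hcard : S.card ≤ n * n * ((q+1) * (q+1)) := by
    refine (Finset.card_filter_le _ _).trans ?_
    have e1 : (Finset.Icc (1:ℤ) (n:ℤ)).card = n := by rw [Int.card_Icc]; omega
    have e2 : (Finset.Icc (0:ℤ) (q:ℤ)).card = q + 1 := by rw [Int.card_Icc]; omega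
    simp only [Finset.card_product, e1, e2]
    exact le_of_eq (by ring)
  have h3 : P {ω | ∃ k ∈ Finset.Icc (1 : ℤ) (n : ℤ),
        ∃ j ∈ Finset.Icc (1 : ℤ) (n : ℤ), j ∉ Finset.Icc k (k + q) ∧
        ∃ l₁ ∈ Finset.Icc (0 : ℤ) (q : ℤ), ∃ l ∈ Finset.Icc (0 : ℤ) (q : ℤ),
        l ≠ l₁ ∧ δ * an < C ω * |Z k ω| ∧
        δ * an < C ω * |Z (j - l₁) ω| ∧ δ * an < C ω * |Z (j - l) ω|}
      ≤ P A + ((n * n * ((q+1)*(q+1)) : ℕ) : ℝ≥0∞) * P (s 1) ^ 3 := by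
    refine h1.trans (add_le_add_right (h2.trans ?_) _)
    rw [nsmul_eq_mul]
    exact mul_le_mul_left (Nat.cast_le.2 hcard) _
  have hne1 : P A + ((n * n * ((q+1)*(q+1)) : ℕ) : ℝ≥0∞) * P (s 1) ^ 3 ≠ ⊤ := by
    refine ENNReal.add_ne_top.2 ⟨measure_ne_top _ _, ?_⟩
    exact ENNReal.mul_ne_top (ENNReal.natCast_ne_top _) (ENNReal.pow_ne_top (measure_ne_top _ _))
  have h4 := ENNReal.toReal_mono hne1 h3
  rw [ENNReal.toReal_add (measure_ne_top _ _) (ENNReal.mul_ne_top (ENNReal.natCast_ne_top _)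
    (ENNReal.pow_ne_top (measure_ne_top _ _))), ENNReal.toReal_mul, ENNReal.toReal_pow,
    ENNReal.toReal_natCast] at h4
  have hc : ((n * n * ((q+1)*(q+1)) : ℕ) : ℝ) = (n:ℝ)^2 * ((q:ℝ)+1)^2 := by push_cast; ring
  rw [hc] at h4
  exact h4

/-- For C nonnegative, a.s. finite, independent of (Z_i), q ∈ ℕ and δ > 0,
the probability that there exist k ∈ {1,…,n}, j ∈ {1,…,n} \ {k,…,k+q}, l₁ ∈ {0,…,q}
and l ∈ {0,…,q}, l ≠ l₁, with C·|Z_k| > δ·a_n, C·|Z_{j-l₁}| > δ·a_n and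
C·|Z_{j-l}| > δ·a_n tends to 0 as n → ∞. -/
theorem stmt4
    {Ω : Type*} [MeasurableSpace Ω] (P : Measure Ω) [IsProbabilityMeasure P]
    (Z : ℤ → Ω → ℝ) (hZmeas : ∀ i, Measurable (Z i))
    (hZindep : iIndepFun Z P)
    (hZident : ∀ i, IdentDistrib (Z i) (Z 1) P P)
    (α : ℝ) (hα : 0 < α) (L : ℝ → ℝ)
    (hreg : ∀ x > (0 : ℝ), (P {ω | x < |Z 1 ω|}).toReal = x ^ (-α) * L x)
    (hL : ∀ l > (0 : ℝ), Tendsto (fun x => L (l * x) / L x) atTop (nhds 1))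
    (a : ℕ → ℝ) (ha : ∀ n, 0 < a n)
    (hna : Tendsto (fun n : ℕ => (n : ℝ) * (P {ω | a n < |Z 1 ω|}).toReal) atTop (nhds 1))
    (C : Ω → ℝ) (hCmeas : Measurable C) (hCnonneg : ∀ ω, 0 ≤ C ω)
    (hCZindep : Indep (MeasurableSpace.comap C Real.measurableSpace)
      (⨆ i, MeasurableSpace.comap (Z i) Real.measurableSpace) P)
    (q : ℕ) (δ : ℝ) (hδ : 0 < δ) :
    Tendsto
      (fun n : ℕ =>
        (P {ω | ∃ k ∈ Finset.Icc (1 : ℤ) (n : ℤ),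
            ∃ j ∈ Finset.Icc (1 : ℤ) (n : ℤ), j ∉ Finset.Icc k (k + q) ∧
            ∃ l₁ ∈ Finset.Icc (0 : ℤ) (q : ℤ), ∃ l ∈ Finset.Icc (0 : ℤ) (q : ℤ),
            l ≠ l₁ ∧ δ * a n < C ω * |Z k ω| ∧
            δ * a n < C ω * |Z (j - l₁) ω| ∧ δ * a n < C ω * |Z (j - l) ω|}).toReal)
      atTop (nhds 0) := by
  have hLpos := aux_Lpos P (Z 1) α L hreg hL
  have haT := aux_aTop P (Z 1) α L hreg hLpos a ha hna
  have hCtail : Tendsto (fun j : ℕ => P {ω | (j:ℝ) < C ω}) atTop (nhds 0) := by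
    have hI : (⋂ j : ℕ, {ω | (j:ℝ) < C ω}) = ∅ := by
      ext ω
      simp only [Set.mem_iInter, Set.mem_setOf_eq, Set.mem_empty_iff_false, iff_false,
        not_forall, not_lt]
      exact ⟨⌈C ω⌉₊, Nat.le_ceil _⟩
    have h := tendsto_measure_iInter_atTop (μ := P) (s := fun j : ℕ => {ω | (j:ℝ) < C ω})
      (fun j => (measurableSet_lt measurable_const hCmeas).nullMeasurableSet)
      (fun i j hij ω hω => show (i:ℝ) < C ω from lt_of_le_of_lt (Nat.cast_le.2 hij) hω) ⟨0, measure_ne_top _ _⟩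
    rw [hI] at h
    simpa [Function.comp_def] using h
  have hCtail' : Tendsto (fun j : ℕ => (P {ω | (j:ℝ) < C ω}).toReal) atTop (nhds 0) := by
    have h := (ENNReal.tendsto_toReal ENNReal.zero_ne_top).comp hCtail
    simpa [Function.comp_def] using h
  rw [Metric.tendsto_atTop]
  intro ε hε
  obtain ⟨j₀, hj₀⟩ : ∃ j : ℕ, (P {ω | (j:ℝ) < C ω}).toReal < ε/2 :=
    (hCtail'.eventually (gt_mem_nhds (half_pos hε))).exists
  set M : ℝ := (j₀:ℝ) + 1 with hMdef
  have hM : 0 < M := by positivity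
  have hAle : (P {ω | M < C ω}).toReal ≤ (P {ω | (j₀:ℝ) < C ω}).toReal :=
    ENNReal.toReal_mono (measure_ne_top _ _)
      (measure_mono fun ω hω => show (j₀:ℝ) < C ω from lt_trans (lt_add_one _) hω)
  have hkey := aux_key P (Z 1) α L hreg hL hLpos a ha haT hna (δ / M) (div_pos hδ hM)
  have hquant : Tendsto (fun n : ℕ => (n:ℝ)^2 * ((q:ℝ)+1)^2
      * ((P {ω | δ / M * a n < |Z 1 ω|}).toReal)^3) atTop (nhds 0) := by
    have h1 : Tendsto (fun n : ℕ => ((n:ℝ) * (P {ω | δ / M * a n < |Z 1 ω|}).toReal)^3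
        * (((q:ℝ)+1)^2 / n)) atTop (nhds (((δ/M) ^ (-α))^3 * 0)) :=
      (hkey.pow 3).mul (tendsto_const_div_atTop_nhds_zero_nat _)
    rw [mul_zero] at h1
    apply h1.congr'
    filter_upwards [eventually_ge_atTop 1] with n hn
    have hn0 : (n:ℝ) ≠ 0 := Nat.cast_ne_zero.2 (by omega)
    field_simp
  obtain ⟨N, hN⟩ := eventually_atTop.1 (hquant.eventually (gt_mem_nhds (half_pos hε)))
  refine ⟨N, fun n hn => ?_⟩
  rw [Real.dist_eq, sub_zero, abs_of_nonneg ENNReal.toReal_nonneg]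
  calc (P {ω | ∃ k ∈ Finset.Icc (1 : ℤ) (n : ℤ),
            ∃ j ∈ Finset.Icc (1 : ℤ) (n : ℤ), j ∉ Finset.Icc k (k + q) ∧
            ∃ l₁ ∈ Finset.Icc (0 : ℤ) (q : ℤ), ∃ l ∈ Finset.Icc (0 : ℤ) (q : ℤ),
            l ≠ l₁ ∧ δ * a n < C ω * |Z k ω| ∧
            δ * a n < C ω * |Z (j - l₁) ω| ∧ δ * a n < C ω * |Z (j - l) ω|}).toReal
      ≤ (P {ω | M < C ω}).toReal
        + (n:ℝ)^2 * ((q:ℝ)+1)^2 * ((P {ω | δ / M * a n < |Z 1 ω|}).toReal)^3 :=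
      aux_bound P Z hZindep hZident C q δ (a n) M hM n
    _ < ε/2 + ε/2 := add_lt_add_of_le_of_lt (le_trans hAle hj₀.le) (hN n hn)
    _ = ε := add_halves ε
end

section
/- Let (C_j)_{j≥0} be a sequence of real random variables, independent of (Z_i)_{i∈ℤ}, such that C_+ := sup_{j≥0}(C_j ∨ 0) and C_− := sup_{j≥0}((−C_j) ∨ 0) are almost surely finite. Then for every x > 0, lim_{n→∞} P( max_{1≤i≤n} (|Z_i|/a_n)·( C_+·1_{{Z_i>0}} + C_−·1_{{Z_i<0}} ) ≤ x ) = E[ exp( −x^{−α}·( p·C_+^α + r·C_−^α ) ) ]. -/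
open MeasureTheory ProbabilityTheory Filter
open Set

def auxE (x aN c d : ℝ) : Set ℝ :=
  {t | (|t| / aN) * ((if 0 < t then c else 0) + (if t < 0 then d else 0)) ≤ x}

lemma auxE_meas (x aN c d : ℝ) : MeasurableSet (auxE x aN c d) := by
  apply measurableSet_le _ measurable_const
  apply Measurable.mul
  · exact measurable_id.abs.div_const _
  · apply Measurable.add
    · exact Measurable.ite measurableSet_Ioi measurable_const measurable_const
    · exact Measurable.ite measurableSet_Iio measurable_const measurable_const

lemma auxE_compl (x aN c d : ℝ) (hx : 0 < x) (haN : 0 < aN) (hc : 0 ≤ c) (hd : 0 ≤ d) :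
    (auxE x aN c d)ᶜ =
      (if 0 < c then Ioi (x / c * aN) else (∅ : Set ℝ)) ∪
      (if 0 < d then Iio (-(x / d * aN)) else (∅ : Set ℝ)) := by
  ext t
  simp only [auxE, mem_compl_iff, mem_setOf_eq, not_le, mem_union]
  rw [show (x < |t| / aN * ((if 0 < t then c else 0) + (if t < 0 then d else 0))) ↔
      (x * aN < |t| * ((if 0 < t then c else 0) + (if t < 0 then d else 0))) by
    rw [div_mul_eq_mul_div, lt_div_iff₀ haN]]
  rcases lt_trichotomy t 0 with ht | ht | ht
  · rw [if_neg (by linarith), if_pos ht, abs_of_neg ht, zero_add]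
    have hA : t ∉ (if 0 < c then Ioi (x / c * aN) else (∅ : Set ℝ)) := by
      by_cases h : 0 < c
      · rw [if_pos h, mem_Ioi]
        intro hmem
        have : 0 < x / c * aN := mul_pos (div_pos hx h) haN
        linarith
      · rw [if_neg h]; exact notMem_empty t
    simp only [hA, false_or]
    by_cases h : 0 < d
    · rw [if_pos h, mem_Iio, lt_neg, div_mul_eq_mul_div, div_lt_iff₀ h]
    · rw [if_neg h]
      have hd0 : d = 0 := le_antisymm (not_lt.mp h) hd
      simp only [hd0, mul_zero, notMem_empty, iff_false, not_lt]
      positivity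
  · subst ht
    simp only [abs_zero, zero_mul]
    constructor
    · intro hlt
      have : 0 < x * aN := mul_pos hx haN
      linarith
    · rintro (hmem | hmem)
      · by_cases h : 0 < c
        · rw [if_pos h, mem_Ioi] at hmem
          have : 0 < x / c * aN := mul_pos (div_pos hx h) haN
          linarith
        · rw [if_neg h] at hmem; exact absurd hmem (notMem_empty _)
      · by_cases h : 0 < d
        · rw [if_pos h, mem_Iio] at hmem
          have : 0 < x / d * aN := mul_pos (div_pos hx h) haN
          linarith
        · rw [if_neg h] at hmem; exact absurd hmem (notMem_empty _)
  · rw [if_pos ht, if_neg (by linarith), abs_of_pos ht, add_zero]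
    have hB : t ∉ (if 0 < d then Iio (-(x / d * aN)) else (∅ : Set ℝ)) := by
      by_cases h : 0 < d
      · rw [if_pos h, mem_Iio]
        intro hmem
        have : 0 < x / d * aN := mul_pos (div_pos hx h) haN
        linarith
      · rw [if_neg h]; exact notMem_empty t
    simp only [hB, or_false]
    by_cases h : 0 < c
    · rw [if_pos h, mem_Ioi, div_mul_eq_mul_div, div_lt_iff₀ h, mul_comm t c]
    · rw [if_neg h]
      have hc0 : c = 0 := le_antisymm (not_lt.mp h) hc
      simp only [hc0, mul_zero, notMem_empty, iff_false, not_lt]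
      positivity

lemma aux_exp_pow {q : ℕ → ℝ} (h0 : ∀ n, 0 ≤ q n) (h1 : ∀ n, q n ≤ 1) {l : ℝ}
    (h : Tendsto (fun n : ℕ => (n : ℝ) * q n) atTop (nhds l)) :
    Tendsto (fun n : ℕ => (1 - q n) ^ n) atTop (nhds (Real.exp (-l))) := by
  -- q n → 0
  have hq0 : Tendsto q atTop (nhds 0) := by
    have h2 : Tendsto (fun n : ℕ => ((n : ℝ) * q n) * (n : ℝ)⁻¹) atTop (nhds (l * 0)) :=
      h.mul tendsto_inv_atTop_nhds_zero_nat
    rw [mul_zero] at h2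
    apply h2.congr'
    filter_upwards [eventually_gt_atTop 0] with n hn
    field_simp
  have hsmall : ∀ᶠ n in atTop, q n ≤ 1/2 := by
    exact hq0.eventually_le_const (by norm_num : (0:ℝ) < 1/2)
  -- key log bound
  have key : ∀ n, q n ≤ 1/2 → |Real.log (1 - q n) + q n| ≤ 2 * q n ^ 2 := by
    intro n hn
    have hq := h0 n
    have hpos : (0:ℝ) < 1 - q n := by linarith
    have hub : Real.log (1 - q n) ≤ -q n := by
      have := Real.log_le_sub_one_of_pos hpos
      linarith
    have hlb : -(q n / (1 - q n)) ≤ Real.log (1 - q n) := by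
      have h2 := Real.log_le_sub_one_of_pos (inv_pos.mpr hpos)
      rw [Real.log_inv] at h2
      have : (1 - q n)⁻¹ - 1 = q n / (1 - q n) := by field_simp; ring
      linarith [h2, this.symm ▸ h2]
    have hid : q n - q n / (1 - q n) = -(q n ^ 2 / (1 - q n)) := by
      field_simp; ring
    have hfrac2 : q n ^ 2 / (1 - q n) ≤ 2 * q n ^ 2 := by
      rw [div_le_iff₀ hpos]; nlinarith
    rw [abs_le]
    constructor
    · nlinarith
    · nlinarith
  -- n * log (1 - q n) → -l
  have hlog : Tendsto (fun n : ℕ => (n : ℝ) * Real.log (1 - q n)) atTop (nhds (-l)) := by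
    have hrem : Tendsto (fun n : ℕ => (n : ℝ) * (Real.log (1 - q n) + q n)) atTop (nhds 0) := by
      apply squeeze_zero_norm' _ (by simpa using (h.mul hq0).const_mul 2)
      filter_upwards [hsmall] with n hn
      have := key n hn
      calc ‖(n : ℝ) * (Real.log (1 - q n) + q n)‖
          = (n : ℝ) * |Real.log (1 - q n) + q n| := by
            rw [Real.norm_eq_abs, abs_mul, Nat.abs_cast]
        _ ≤ (n : ℝ) * (2 * q n ^ 2) := by
            apply mul_le_mul_of_nonneg_left this (Nat.cast_nonneg n)
        _ = 2 * ((n : ℝ) * q n * q n) := by ring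
    have := hrem.sub h
    simp only [mul_add] at this
    convert this using 2 with n
    · ring
    · ring_nf
  -- conclude
  have := (Real.continuous_exp.tendsto _).comp hlog
  apply this.congr'
  filter_upwards [hsmall] with n hn
  have hpos : (0:ℝ) < 1 - q n := by linarith [h0 n]
  simp only [Function.comp_apply]
  rw [Real.exp_nat_mul, Real.exp_log hpos]

lemma aux_meas_iSup {Ω : Type*} {m : MeasurableSpace Ω} (g : ℕ → Ω → ℝ)
    (hg : ∀ j, Measurable[m] (g j)) :
    Measurable[m] (fun ω => ⨆ j, g j ω) := by
  apply measurable_of_Iic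
  intro t
  have hA : ∀ s : ℝ, MeasurableSet[m] (⋂ j, {ω | g j ω ≤ s}) := fun s =>
    MeasurableSet.iInter (fun j => (hg j) measurableSet_Iic)
  have hB : MeasurableSet[m] (⋃ q : ℚ, ⋂ j, {ω | g j ω ≤ (q : ℝ)}) :=
    MeasurableSet.iUnion (fun q => hA q)
  have hBdd : ∀ ω, (ω ∈ ⋃ q : ℚ, ⋂ j, {ω | g j ω ≤ (q : ℝ)}) ↔
      BddAbove (Set.range fun j => g j ω) := by
    intro ω
    simp only [mem_iUnion, mem_iInter, mem_setOf_eq]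
    constructor
    · rintro ⟨q, hq⟩
      exact ⟨q, by rintro y ⟨j, rfl⟩; exact hq j⟩
    · rintro ⟨b, hb⟩
      obtain ⟨q, hq⟩ := exists_rat_gt b
      exact ⟨q, fun j => le_trans (hb ⟨j, rfl⟩) hq.le⟩
  by_cases h0 : (0:ℝ) ≤ t
  · convert ((hA t).union hB.compl) using 1
    ext ω
    simp only [mem_preimage, mem_Iic, mem_union, mem_iInter, mem_setOf_eq, mem_compl_iff, hBdd]
    constructor
    · intro hsup
      by_cases hb : BddAbove (Set.range fun j => g j ω)
      · exact Or.inl (fun j => le_trans (le_ciSup hb j) hsup)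
      · exact Or.inr hb
    · rintro (hall | hnb)
      · exact ciSup_le hall
      · rw [Real.iSup_of_not_bddAbove hnb]; exact h0
  · convert hA t using 1
    ext ω
    simp only [mem_preimage, mem_Iic, mem_iInter, mem_setOf_eq]
    constructor
    · intro hsup
      by_cases hb : BddAbove (Set.range fun j => g j ω)
      · exact fun j => le_trans (le_ciSup hb j) hsup
      · rw [Real.iSup_of_not_bddAbove hb] at hsup; exact absurd hsup h0
    · intro hall
      exact ciSup_le hall

lemma aux_pos (T L : ℝ → ℝ) (α : ℝ) (hα : 0 < α) (hT0 : ∀ t, 0 ≤ T t) (hTanti : Antitone T)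
    (hreg : ∀ s > (0:ℝ), T s = s ^ (-α) * L s)
    (hL2 : Tendsto (fun x => L (2 * x) / L x) atTop (nhds 1)) :
    ∀ t : ℝ, 0 < T t := by
  have hev : ∀ᶠ x in atTop, L x ≠ 0 := by
    have := hL2.eventually_ne (by norm_num : (1:ℝ) ≠ 0)
    filter_upwards [this] with x hx
    intro h0
    rw [h0, div_zero] at hx
    exact hx rfl
  obtain ⟨s1, hs1⟩ := hev.exists_forall_of_atTop
  intro t
  set s := max t (max s1 1) with hs
  have hspos : (0:ℝ) < s := lt_of_lt_of_le one_pos (le_trans (le_max_right s1 1) (le_max_right _ _))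
  have hLs : L s ≠ 0 := hs1 s (le_trans (le_max_left s1 1) (le_max_right _ _))
  have hLpos : 0 < L s := by
    rcases lt_or_eq_of_le (show 0 ≤ L s by
      have h1 := hT0 s
      rw [hreg s hspos] at h1
      have h2 : (0:ℝ) < s ^ (-α) := Real.rpow_pos_of_pos hspos _
      nlinarith) with h | h
    · exact h
    · exact absurd h.symm hLs
  have hTs : 0 < T s := by
    rw [hreg s hspos]
    exact mul_pos (Real.rpow_pos_of_pos hspos _) hLpos
  exact lt_of_lt_of_le hTs (hTanti (le_max_left _ _))

lemma aux_a_top (T : ℝ → ℝ) (hTanti : Antitone T) (hTpos : ∀ t, 0 < T t) (a : ℕ → ℝ)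
    (hna : Tendsto (fun n : ℕ => (n : ℝ) * T (a n)) atTop (nhds 1)) :
    Tendsto a atTop atTop := by
  have hTa0 : Tendsto (fun n : ℕ => T (a n)) atTop (nhds 0) := by
    have h2 : Tendsto (fun n : ℕ => ((n : ℝ) * T (a n)) * (n : ℝ)⁻¹) atTop (nhds (1 * 0)) :=
      hna.mul tendsto_inv_atTop_nhds_zero_nat
    rw [one_mul] at h2
    apply h2.congr'
    filter_upwards [eventually_gt_atTop 0] with n hn
    have : (n:ℝ) ≠ 0 := Nat.cast_ne_zero.mpr hn.ne'
    field_simp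
  rw [tendsto_atTop]
  intro M
  have := hTa0.eventually_lt_const (hTpos M)
  filter_upwards [this] with n hn
  by_contra hc
  push_neg at hc
  exact absurd (hTanti hc.le) (not_le.mpr hn)

lemma aux_limit (T L G : ℝ → ℝ) (α : ℝ) (c : ℝ)
    (hTpos : ∀ t, 0 < T t)
    (hreg : ∀ s > (0:ℝ), T s = s ^ (-α) * L s)
    (hL : ∀ l > (0:ℝ), Tendsto (fun x => L (l * x) / L x) atTop (nhds 1))
    (hG : Tendsto (fun x => G x / T x) atTop (nhds c))
    (a : ℕ → ℝ) (ha : ∀ n, 0 < a n) (hatop : Tendsto a atTop atTop)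
    (hna : Tendsto (fun n : ℕ => (n : ℝ) * T (a n)) atTop (nhds 1))
    (u : ℝ) (hu : 0 < u) :
    Tendsto (fun n : ℕ => (n : ℝ) * G (u * a n)) atTop (nhds (c * u ^ (-α))) := by
  have huatop : Tendsto (fun n : ℕ => u * a n) atTop atTop := hatop.const_mul_atTop hu
  have h1 : Tendsto (fun n : ℕ => G (u * a n) / T (u * a n)) atTop (nhds c) :=
    hG.comp huatop
  have h2 : Tendsto (fun n : ℕ => T (u * a n) / T (a n)) atTop (nhds (u ^ (-α))) := by
    have hLr : Tendsto (fun n : ℕ => L (u * a n) / L (a n)) atTop (nhds 1) :=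
      (hL u hu).comp hatop
    have heq : ∀ n, T (u * a n) / T (a n) = u ^ (-α) * (L (u * a n) / L (a n)) := by
      intro n
      have hapos := ha n
      have huapos : 0 < u * a n := mul_pos hu hapos
      rw [hreg _ huapos, hreg _ hapos, Real.mul_rpow hu.le hapos.le]
      rcases eq_or_ne (L (a n)) 0 with h | h
      · simp [h]
      · have : (a n) ^ (-α) ≠ 0 := (Real.rpow_pos_of_pos hapos _).ne'
        field_simp
    have := hLr.const_mul (u ^ (-α))
    rw [mul_one] at this
    exact this.congr (fun n => (heq n).symm)
  have h3 := (h1.mul h2).mul hna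
  rw [show c * u ^ (-α) * 1 = c * u ^ (-α) by ring] at h3
  apply h3.congr
  intro n
  have hT1 : T (u * a n) ≠ 0 := (hTpos _).ne'
  have hT2 : T (a n) ≠ 0 := (hTpos _).ne'
  field_simp

lemma aux_conv (μ1 : Measure ℝ) [IsProbabilityMeasure μ1] (x α p r : ℝ) (hx : 0 < x) (hα : 0 < α)
    (a : ℕ → ℝ) (ha : ∀ n, 0 < a n)
    (hplim : ∀ u > (0:ℝ), Tendsto (fun n : ℕ => (n : ℝ) * (μ1 (Ioi (u * a n))).toReal)
      atTop (nhds (p * u ^ (-α))))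
    (hrlim : ∀ u > (0:ℝ), Tendsto (fun n : ℕ => (n : ℝ) * (μ1 (Iio (-(u * a n)))).toReal)
      atTop (nhds (r * u ^ (-α))))
    (c d : ℝ) (hc : 0 ≤ c) (hd : 0 ≤ d) :
    Tendsto (fun n : ℕ => (μ1 (auxE x (a n) c d)).toReal ^ n) atTop
      (nhds (Real.exp (-(x ^ (-α)) * (p * c ^ α + r * d ^ α)))) := by
  set q : ℕ → ℝ := fun n => (μ1 (auxE x (a n) c d)ᶜ).toReal with hq
  -- limits of the two pieces
  have hA : Tendsto (fun n : ℕ =>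
      (n : ℝ) * (μ1 (if 0 < c then Ioi (x / c * a n) else (∅ : Set ℝ))).toReal) atTop
      (nhds (p * (x ^ (-α) * c ^ α))) := by
    by_cases h : 0 < c
    · simp only [if_pos h]
      have hu : 0 < x / c := div_pos hx h
      have := hplim (x / c) hu
      have hrw : (x / c) ^ (-α) = x ^ (-α) * c ^ α := by
        rw [Real.div_rpow hx.le h.le, Real.rpow_neg h.le, div_eq_mul_inv, inv_inv]
      rwa [hrw] at this
    · have hc0 : c = 0 := le_antisymm (not_lt.mp h) hc
      subst hc0
      simp only [if_neg (lt_irrefl (0:ℝ)), measure_empty, ENNReal.toReal_zero, mul_zero,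
        Real.zero_rpow hα.ne']
      exact tendsto_const_nhds
  have hB : Tendsto (fun n : ℕ =>
      (n : ℝ) * (μ1 (if 0 < d then Iio (-(x / d * a n)) else (∅ : Set ℝ))).toReal) atTop
      (nhds (r * (x ^ (-α) * d ^ α))) := by
    by_cases h : 0 < d
    · simp only [if_pos h]
      have hu : 0 < x / d := div_pos hx h
      have := hrlim (x / d) hu
      have hrw : (x / d) ^ (-α) = x ^ (-α) * d ^ α := by
        rw [Real.div_rpow hx.le h.le, Real.rpow_neg h.le, div_eq_mul_inv, inv_inv]
      rwa [hrw] at this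
    · have hd0 : d = 0 := le_antisymm (not_lt.mp h) hd
      subst hd0
      simp only [if_neg (lt_irrefl (0:ℝ)), measure_empty, ENNReal.toReal_zero, mul_zero,
        Real.zero_rpow hα.ne']
      exact tendsto_const_nhds
  -- additivity
  have hqsplit : ∀ n, q n =
      (μ1 (if 0 < c then Ioi (x / c * a n) else (∅ : Set ℝ))).toReal +
      (μ1 (if 0 < d then Iio (-(x / d * a n)) else (∅ : Set ℝ))).toReal := by
    intro n
    have hdisj : Disjoint (if 0 < c then Ioi (x / c * a n) else (∅ : Set ℝ))
        (if 0 < d then Iio (-(x / d * a n)) else (∅ : Set ℝ)) := by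
      rw [Set.disjoint_left]
      intro t ht1 ht2
      by_cases h1 : 0 < c
      · by_cases h2 : 0 < d
        · rw [if_pos h1, mem_Ioi] at ht1
          rw [if_pos h2, mem_Iio] at ht2
          have p1 : 0 < x / c * a n := mul_pos (div_pos hx h1) (ha n)
          have p2 : 0 < x / d * a n := mul_pos (div_pos hx h2) (ha n)
          linarith
        · rw [if_neg h2] at ht2; exact absurd ht2 (notMem_empty t)
      · rw [if_neg h1] at ht1; exact absurd ht1 (notMem_empty t)
    have hm2 : MeasurableSet (if 0 < d then Iio (-(x / d * a n)) else (∅ : Set ℝ)) := by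
      by_cases h2 : 0 < d
      · rw [if_pos h2]; exact measurableSet_Iio
      · rw [if_neg h2]; exact MeasurableSet.empty
    rw [hq]
    simp only
    rw [auxE_compl x (a n) c d hx (ha n) hc hd, measure_union hdisj hm2,
      ENNReal.toReal_add (measure_ne_top _ _) (measure_ne_top _ _)]
  have hq01 : (∀ n, 0 ≤ q n) ∧ (∀ n, q n ≤ 1) := by
    constructor
    · intro n; exact ENNReal.toReal_nonneg
    · intro n
      have := prob_le_one (μ := μ1) (s := (auxE x (a n) c d)ᶜ)
      exact ENNReal.toReal_le_of_le_ofReal one_pos.le (by simpa using this)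
  have hnq : Tendsto (fun n : ℕ => (n : ℝ) * q n) atTop
      (nhds (x ^ (-α) * (p * c ^ α + r * d ^ α))) := by
    have := hA.add hB
    rw [show p * (x ^ (-α) * c ^ α) + r * (x ^ (-α) * d ^ α)
        = x ^ (-α) * (p * c ^ α + r * d ^ α) by ring] at this
    apply this.congr
    intro n
    rw [hqsplit n]
    ring
  have hmain := aux_exp_pow hq01.1 hq01.2 hnq
  rw [show -(x ^ (-α) * (p * c ^ α + r * d ^ α)) = -(x ^ (-α)) * (p * c ^ α + r * d ^ α)
    by ring] at hmain
  apply hmain.congr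
  intro n
  congr 1
  have hcompl : μ1 (auxE x (a n) c d)ᶜ = 1 - μ1 (auxE x (a n) c d) :=
    prob_compl_eq_one_sub (auxE_meas x (a n) c d)
  rw [hq]
  simp only
  rw [hcompl, ENNReal.toReal_sub_of_le prob_le_one ENNReal.one_ne_top, ENNReal.toReal_one]
  ring

/-- With (C_j) independent of (Z_i) and C_+ = sup_j (C_j ∨ 0),
C_- = sup_j ((-C_j) ∨ 0) a.s. finite, for every x > 0,
P( max_{1≤i≤n} (|Z_i|/a_n)·(C_+·1_{Z_i>0} + C_-·1_{Z_i<0}) ≤ x )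
  → E[ exp( -x^{-α}·( p·C_+^α + r·C_-^α ) ) ]. -/
theorem stmt10
    {Ω : Type*} [MeasurableSpace Ω] (P : Measure Ω) [IsProbabilityMeasure P]
    (Z : ℤ → Ω → ℝ) (hZmeas : ∀ i, Measurable (Z i))
    (hZindep : iIndepFun Z P)
    (hZident : ∀ i, IdentDistrib (Z i) (Z 1) P P)
    (α : ℝ) (hα : 0 < α) (L : ℝ → ℝ)
    (hreg : ∀ x > (0 : ℝ), (P {ω | x < |Z 1 ω|}).toReal = x ^ (-α) * L x)
    (hL : ∀ l > (0 : ℝ), Tendsto (fun x => L (l * x) / L x) atTop (nhds 1))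
    (p r : ℝ) (hp : p ∈ Set.Icc (0 : ℝ) 1) (hr : r ∈ Set.Icc (0 : ℝ) 1) (hpr : p + r = 1)
    (hptail : Tendsto (fun x : ℝ =>
      (P {ω | x < Z 1 ω}).toReal / (P {ω | x < |Z 1 ω|}).toReal) atTop (nhds p))
    (hrtail : Tendsto (fun x : ℝ =>
      (P {ω | Z 1 ω < -x}).toReal / (P {ω | x < |Z 1 ω|}).toReal) atTop (nhds r))
    (a : ℕ → ℝ) (ha : ∀ n, 0 < a n)
    (hna : Tendsto (fun n : ℕ => (n : ℝ) * (P {ω | a n < |Z 1 ω|}).toReal) atTop (nhds 1))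
    (C : ℕ → Ω → ℝ) (hCmeas : ∀ j, Measurable (C j))
    (hCZindep : Indep (⨆ j, MeasurableSpace.comap (C j) Real.measurableSpace)
      (⨆ i, MeasurableSpace.comap (Z i) Real.measurableSpace) P)
    (Cp Cm : Ω → ℝ)
    (hCp : Cp = fun ω => ⨆ j : ℕ, max (C j ω) 0)
    (hCm : Cm = fun ω => ⨆ j : ℕ, max (-(C j ω)) 0)
    (hCpfin : ∀ᵐ ω ∂P, BddAbove (Set.range fun j : ℕ => max (C j ω) 0))
    (hCmfin : ∀ᵐ ω ∂P, BddAbove (Set.range fun j : ℕ => max (-(C j ω)) 0)) :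
    ∀ x > (0 : ℝ),
      Tendsto
        (fun n : ℕ =>
          (P {ω | ∀ i ∈ Finset.Icc (1 : ℤ) (n : ℤ),
            (|Z i ω| / a n) *
              ((if 0 < Z i ω then Cp ω else 0) + (if Z i ω < 0 then Cm ω else 0)) ≤ x}).toReal)
        atTop
        (nhds (∫ ω, Real.exp (-(x ^ (-α)) * (p * Cp ω ^ α + r * Cm ω ^ α)) ∂P)) := by
  intro x hx
  -- tail function analysis
  have hT0 : ∀ t : ℝ, 0 ≤ (P {ω | t < |Z 1 ω|}).toReal := fun t => ENNReal.toReal_nonneg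
  have hTanti : Antitone (fun t : ℝ => (P {ω | t < |Z 1 ω|}).toReal) := by
    intro t1 t2 h12
    apply ENNReal.toReal_mono (measure_ne_top _ _)
    apply measure_mono
    intro ω hω
    exact lt_of_le_of_lt h12 hω
  have hTpos : ∀ t : ℝ, 0 < (P {ω | t < |Z 1 ω|}).toReal :=
    aux_pos _ L α hα hT0 hTanti hreg (hL 2 two_pos)
  have hatop : Tendsto a atTop atTop := aux_a_top _ hTanti hTpos a hna
  haveI hμ1prob : IsProbabilityMeasure (P.map (Z 1)) :=
    Measure.isProbabilityMeasure_map (hZmeas 1).aemeasurable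
  have hμ1Ioi : ∀ v : ℝ, (P.map (Z 1)) (Ioi v) = P {ω | v < Z 1 ω} := by
    intro v
    rw [Measure.map_apply (hZmeas 1) measurableSet_Ioi]
    rfl
  have hμ1Iio : ∀ v : ℝ, (P.map (Z 1)) (Iio v) = P {ω | Z 1 ω < v} := by
    intro v
    rw [Measure.map_apply (hZmeas 1) measurableSet_Iio]
    rfl
  have hplim : ∀ u > (0:ℝ), Tendsto
      (fun n : ℕ => (n : ℝ) * ((P.map (Z 1)) (Ioi (u * a n))).toReal) atTop
      (nhds (p * u ^ (-α))) := by
    intro u hu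
    have h := aux_limit _ L (fun t => (P {ω | t < Z 1 ω}).toReal) α p hTpos hreg hL hptail
      a ha hatop hna u hu
    apply h.congr
    intro n
    rw [hμ1Ioi]
  have hrlim : ∀ u > (0:ℝ), Tendsto
      (fun n : ℕ => (n : ℝ) * ((P.map (Z 1)) (Iio (-(u * a n)))).toReal) atTop
      (nhds (r * u ^ (-α))) := by
    intro u hu
    have h := aux_limit _ L (fun t => (P {ω | Z 1 ω < -t}).toReal) α r hTpos hreg hL hrtail
      a ha hatop hna u hu
    apply h.congr
    intro n
    rw [hμ1Iio]
  -- nonnegativity of Cp and Cm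
  have hCp0 : ∀ ω, 0 ≤ Cp ω := by
    intro ω
    rw [hCp]
    show (0:ℝ) ≤ ⨆ j : ℕ, max (C j ω) 0
    by_cases hb : BddAbove (Set.range fun j : ℕ => max (C j ω) 0)
    · exact le_trans (le_max_right _ _) (le_ciSup hb 0)
    · rw [Real.iSup_of_not_bddAbove hb]
  have hCm0 : ∀ ω, 0 ≤ Cm ω := by
    intro ω
    rw [hCm]
    show (0:ℝ) ≤ ⨆ j : ℕ, max (-(C j ω)) 0
    by_cases hb : BddAbove (Set.range fun j : ℕ => max (-(C j ω)) 0)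
    · exact le_trans (le_max_right _ _) (le_ciSup hb 0)
    · rw [Real.iSup_of_not_bddAbove hb]
  -- measurability of Cp, Cm with respect to the C σ-algebra
  have hCjMC : ∀ j, Measurable[⨆ j, MeasurableSpace.comap (C j) Real.measurableSpace] (C j) := by
    intro j
    exact Measurable.mono (Measurable.of_comap_le le_rfl)
      (le_iSup (fun j => MeasurableSpace.comap (C j) Real.measurableSpace) j) le_rfl
  have hCpMC : Measurable[⨆ j, MeasurableSpace.comap (C j) Real.measurableSpace] Cp := by
    rw [hCp]
    exact aux_meas_iSup _ (fun j => (hCjMC j).max measurable_const)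
  have hCmMC : Measurable[⨆ j, MeasurableSpace.comap (C j) Real.measurableSpace] Cm := by
    rw [hCm]
    exact aux_meas_iSup _ (fun j => (hCjMC j).neg.max measurable_const)
  have hMCle : (⨆ j, MeasurableSpace.comap (C j) Real.measurableSpace) ≤ ‹MeasurableSpace Ω› :=
    iSup_le (fun j => (hCmeas j).comap_le)
  have hCpm : Measurable Cp := hCpMC.mono hMCle le_rfl
  have hCmm : Measurable Cm := hCmMC.mono hMCle le_rfl
  have hWm : Measurable (fun ω => (Cp ω, Cm ω)) := hCpm.prodMk hCmm
  have hWMC : Measurable[⨆ j, MeasurableSpace.comap (C j) Real.measurableSpace]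
      (fun ω => (Cp ω, Cm ω)) := hCpMC.prodMk hCmMC
  have hZiMZ : ∀ i, Measurable[⨆ i, MeasurableSpace.comap (Z i) Real.measurableSpace] (Z i) := by
    intro i
    exact Measurable.mono (Measurable.of_comap_le le_rfl)
      (le_iSup (fun i => MeasurableSpace.comap (Z i) Real.measurableSpace) i) le_rfl
  have hVm : Measurable (fun ω (i : ℤ) => Z i ω) := measurable_pi_lambda _ hZmeas
  have hVMZ : Measurable[⨆ i, MeasurableSpace.comap (Z i) Real.measurableSpace]
      (fun ω (i : ℤ) => Z i ω) :=
    @measurable_pi_lambda Ω ℤ (fun _ => ℝ)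
      (⨆ i, MeasurableSpace.comap (Z i) Real.measurableSpace) (fun _ => Real.measurableSpace)
      (fun ω (i : ℤ) => Z i ω) hZiMZ
  have hIndepWV : IndepFun (fun ω => (Cp ω, Cm ω)) (fun ω (i : ℤ) => Z i ω) P :=
    indep_of_indep_of_le_left (indep_of_indep_of_le_right hCZindep hVMZ.comap_le) hWMC.comap_le
  have hmap : P.map (fun ω => ((Cp ω, Cm ω), fun i : ℤ => Z i ω)) =
      (P.map (fun ω => (Cp ω, Cm ω))).prod (P.map (fun ω (i : ℤ) => Z i ω)) :=
    (indepFun_iff_map_prod_eq_prod_map_map hWm.aemeasurable hVm.aemeasurable).mp hIndepWV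
  haveI hPWprob : IsProbabilityMeasure (P.map (fun ω => (Cp ω, Cm ω))) :=
    Measure.isProbabilityMeasure_map hWm.aemeasurable
  -- measurability of the slice measure function
  have hSfull : ∀ n : ℕ, MeasurableSet {q : (ℝ × ℝ) × ℝ |
      (|q.2| / a n) * ((if 0 < q.2 then q.1.1 else 0) + (if q.2 < 0 then q.1.2 else 0)) ≤ x} := by
    intro n
    apply measurableSet_le _ measurable_const
    apply Measurable.mul
    · exact measurable_snd.abs.div_const _
    · apply Measurable.add
      · exact Measurable.ite (measurableSet_lt measurable_const measurable_snd)
          (measurable_fst.fst) measurable_const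
      · exact Measurable.ite (measurableSet_lt measurable_snd measurable_const)
          (measurable_fst.snd) measurable_const
  have hθmeas : ∀ n : ℕ, Measurable (fun w : ℝ × ℝ => (P.map (Z 1)) (auxE x (a n) w.1 w.2)) := by
    intro n
    exact measurable_measure_prodMk_left (ν := P.map (Z 1)) (hSfull n)
  -- the key identity
  have key : ∀ n : ℕ, (P {ω | ∀ i ∈ Finset.Icc (1 : ℤ) (n : ℤ),
      (|Z i ω| / a n) *
        ((if 0 < Z i ω then Cp ω else 0) + (if Z i ω < 0 then Cm ω else 0)) ≤ x}).toReal =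
      ∫ w : ℝ × ℝ, ((P.map (Z 1)) (auxE x (a n) w.1 w.2)).toReal ^ n
        ∂(P.map (fun ω => (Cp ω, Cm ω))) := by
    intro n
    have hBneq : {q : (ℝ × ℝ) × (ℤ → ℝ) | ∀ i ∈ Finset.Icc (1 : ℤ) (n : ℤ),
        (|q.2 i| / a n) * ((if 0 < q.2 i then q.1.1 else 0) + (if q.2 i < 0 then q.1.2 else 0))
          ≤ x} = ⋂ i ∈ Finset.Icc (1 : ℤ) (n : ℤ), (fun q : (ℝ × ℝ) × (ℤ → ℝ) => (q.1, q.2 i))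
            ⁻¹' {q : (ℝ × ℝ) × ℝ | (|q.2| / a n) *
              ((if 0 < q.2 then q.1.1 else 0) + (if q.2 < 0 then q.1.2 else 0)) ≤ x} := by
      ext q
      simp only [mem_setOf_eq, mem_iInter, mem_preimage]
    have hBmeas : MeasurableSet {q : (ℝ × ℝ) × (ℤ → ℝ) | ∀ i ∈ Finset.Icc (1 : ℤ) (n : ℤ),
        (|q.2 i| / a n) * ((if 0 < q.2 i then q.1.1 else 0) + (if q.2 i < 0 then q.1.2 else 0))
          ≤ x} := by
      rw [hBneq]
      apply MeasurableSet.biInter (Finset.Icc (1 : ℤ) (n : ℤ)).countable_toSet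
      intro i _
      exact (measurable_fst.prodMk ((measurable_pi_apply i).comp measurable_snd)) (hSfull n)
    have hpre : {ω | ∀ i ∈ Finset.Icc (1 : ℤ) (n : ℤ),
        (|Z i ω| / a n) *
          ((if 0 < Z i ω then Cp ω else 0) + (if Z i ω < 0 then Cm ω else 0)) ≤ x} =
        (fun ω => ((Cp ω, Cm ω), fun i : ℤ => Z i ω)) ⁻¹'
        {q : (ℝ × ℝ) × (ℤ → ℝ) | ∀ i ∈ Finset.Icc (1 : ℤ) (n : ℤ),
          (|q.2 i| / a n) * ((if 0 < q.2 i then q.1.1 else 0) + (if q.2 i < 0 then q.1.2 else 0))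
            ≤ x} := rfl
    rw [hpre, ← Measure.map_apply (hWm.prodMk hVm) hBmeas, hmap, Measure.prod_apply hBmeas]
    have hVslice : ∀ w : ℝ × ℝ, (P.map (fun ω (i : ℤ) => Z i ω))
        (Prod.mk w ⁻¹' {q : (ℝ × ℝ) × (ℤ → ℝ) | ∀ i ∈ Finset.Icc (1 : ℤ) (n : ℤ),
          (|q.2 i| / a n) * ((if 0 < q.2 i then q.1.1 else 0) + (if q.2 i < 0 then q.1.2 else 0))
            ≤ x}) = (P.map (Z 1)) (auxE x (a n) w.1 w.2) ^ n := by
      intro w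
      have hsl : Prod.mk w ⁻¹' {q : (ℝ × ℝ) × (ℤ → ℝ) | ∀ i ∈ Finset.Icc (1 : ℤ) (n : ℤ),
          (|q.2 i| / a n) * ((if 0 < q.2 i then q.1.1 else 0) + (if q.2 i < 0 then q.1.2 else 0))
            ≤ x} = ⋂ i ∈ Finset.Icc (1 : ℤ) (n : ℤ),
            (fun z : ℤ → ℝ => z i) ⁻¹' (auxE x (a n) w.1 w.2) := by
        ext z
        simp only [mem_preimage, mem_setOf_eq, mem_iInter, auxE]
      have hslmeas : MeasurableSet (⋂ i ∈ Finset.Icc (1 : ℤ) (n : ℤ),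
          (fun z : ℤ → ℝ => z i) ⁻¹' (auxE x (a n) w.1 w.2)) := by
        apply MeasurableSet.biInter (Finset.Icc (1 : ℤ) (n : ℤ)).countable_toSet
        intro i _
        exact (measurable_pi_apply i) (auxE_meas _ _ _ _)
      rw [hsl, Measure.map_apply hVm hslmeas]
      have hVpre : (fun ω (i : ℤ) => Z i ω) ⁻¹' (⋂ i ∈ Finset.Icc (1 : ℤ) (n : ℤ),
          (fun z : ℤ → ℝ => z i) ⁻¹' (auxE x (a n) w.1 w.2)) =
          ⋂ i ∈ Finset.Icc (1 : ℤ) (n : ℤ), Z i ⁻¹' (auxE x (a n) w.1 w.2) := by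
        ext ω
        simp only [mem_preimage, mem_iInter]
      rw [hVpre, hZindep.measure_inter_preimage_eq_mul (Finset.Icc (1 : ℤ) (n : ℤ))
        (sets := fun _ => auxE x (a n) w.1 w.2) (fun i _ => auxE_meas _ _ _ _)]
      have heach : ∀ i : ℤ, P (Z i ⁻¹' (auxE x (a n) w.1 w.2)) =
          (P.map (Z 1)) (auxE x (a n) w.1 w.2) := by
        intro i
        rw [← (hZident i).map_eq, Measure.map_apply (hZmeas i) (auxE_meas _ _ _ _)]
      rw [Finset.prod_congr rfl (fun i _ => heach i), Finset.prod_const]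
      congr 1
      rw [Int.card_Icc]
      simp
    rw [lintegral_congr hVslice,
      ← integral_toReal ((hθmeas n).pow_const n).aemeasurable (ae_of_all _ (fun w =>
        lt_of_le_of_lt (pow_le_one' prob_le_one n) ENNReal.one_lt_top))]
    simp only [ENNReal.toReal_pow]
  -- dominated convergence
  have hconv : ∀ w : ℝ × ℝ, 0 ≤ w.1 → 0 ≤ w.2 →
      Tendsto (fun n : ℕ => ((P.map (Z 1)) (auxE x (a n) w.1 w.2)).toReal ^ n) atTop
        (nhds (Real.exp (-(x ^ (-α)) * (p * w.1 ^ α + r * w.2 ^ α)))) :=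
    fun w h1 h2 => aux_conv (P.map (Z 1)) x α p r hx hα a ha hplim hrlim w.1 w.2 h1 h2
  have hgm : Measurable (fun w : ℝ × ℝ =>
      Real.exp (-(x ^ (-α)) * (p * w.1 ^ α + r * w.2 ^ α))) := by
    apply Continuous.measurable
    apply Real.continuous_exp.comp
    apply Continuous.mul continuous_const
    exact (continuous_const.mul ((Real.continuous_rpow_const hα.le).comp continuous_fst)).add
      (continuous_const.mul ((Real.continuous_rpow_const hα.le).comp continuous_snd))
  have hDCT : Tendsto (fun n : ℕ => ∫ w : ℝ × ℝ,
      ((P.map (Z 1)) (auxE x (a n) w.1 w.2)).toReal ^ n ∂(P.map (fun ω => (Cp ω, Cm ω))))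
      atTop (nhds (∫ w : ℝ × ℝ, Real.exp (-(x ^ (-α)) * (p * w.1 ^ α + r * w.2 ^ α))
        ∂(P.map (fun ω => (Cp ω, Cm ω))))) := by
    apply tendsto_integral_of_dominated_convergence (fun _ => (1 : ℝ))
    · intro n
      exact ((hθmeas n).ennreal_toReal.pow_const n).aestronglyMeasurable
    · exact integrable_const 1
    · intro n
      apply ae_of_all
      intro w
      rw [Real.norm_eq_abs, abs_of_nonneg (pow_nonneg ENNReal.toReal_nonneg n)]
      apply pow_le_one₀ ENNReal.toReal_nonneg
      exact ENNReal.toReal_le_of_le_ofReal one_pos.le (by simpa using prob_le_one)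
    · have haeW : ∀ᵐ w ∂(P.map (fun ω => (Cp ω, Cm ω))), 0 ≤ w.1 ∧ 0 ≤ w.2 := by
        refine (ae_map_iff hWm.aemeasurable ?_).mpr (ae_of_all _ (fun ω => ⟨hCp0 ω, hCm0 ω⟩))
        exact (measurableSet_le measurable_const measurable_fst).inter
          (measurableSet_le measurable_const measurable_snd)
      filter_upwards [haeW] with w hw
      exact hconv w hw.1 hw.2
  have hfinal : ∫ w : ℝ × ℝ, Real.exp (-(x ^ (-α)) * (p * w.1 ^ α + r * w.2 ^ α))
      ∂(P.map (fun ω => (Cp ω, Cm ω))) =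
      ∫ ω, Real.exp (-(x ^ (-α)) * (p * Cp ω ^ α + r * Cm ω ^ α)) ∂P := by
    rw [integral_map hWm.aemeasurable hgm.aestronglyMeasurable]
  rw [← hfinal]
  exact hDCT.congr (fun n => (key n).symm)
end

section
/- Fix integers n ≥ 1 and q ≥ 2. Let (c_j)_{j≥0} be real numbers with Σ_{j≥0} |c_j| < ∞ and let (z_i)_{i∈ℤ} be real numbers such that Σ_{j≥0} |c_j|·|z_{i−j}| < ∞ for every 1 ≤ i ≤ n. Set c^{max} = sup_{j≥q−1} c_j, c^{min} = inf_{j≥q−1} c_j, x_i = Σ_{j≥0} c_j·z_{i−j}, and x_i^q = Σ_{j=0}^{q−2} c_j·z_{i−j} + c^{max}·z_{i−q+1} + c^{min}·z_{i−q}. Then Σ_{i=1}^n |x_i − x_i^q| ≤ 5·(Σ_{j≥q−1}|c_j|)·Σ_{i=1}^{n+1}|z_{i−q}| + Σ_{i=−∞}^0 |z_{i−q}|·Σ_{j=1}^n |c_{q−i+j}|, where the right-hand side is interpreted as a value in [0,∞]. -/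
open Filter

private lemma sum_Icc_int_eq (m : ℕ) (f : ℤ → ℝ) :
    ∑ i ∈ Finset.Icc (1 : ℤ) (m : ℤ), f i = ∑ t ∈ Finset.range m, f ((t : ℤ) + 1) := by
  refine Finset.sum_nbij' (fun i => (i - 1).toNat) (fun t => (t : ℤ) + 1) ?_ ?_ ?_ ?_ ?_
  · intro a ha; simp only [Finset.mem_Icc] at ha; simp only [Finset.mem_range]; omega
  · intro a ha; simp only [Finset.mem_range] at ha; simp only [Finset.mem_Icc]; omega
  · intro a ha; simp only [Finset.mem_Icc] at ha; omega
  · intro a ha; simp only [Finset.mem_range] at ha; omega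
  · intro a ha; simp only [Finset.mem_Icc] at ha; congr 1; omega

set_option maxHeartbeats 1000000 in
/-- deterministic approximation estimate comparing the infinite-order
linear sequence x_i = Σ_{j≥0} c_j·z_{i-j} with its truncation
x_i^q = Σ_{j=0}^{q-2} c_j·z_{i-j} + c^{max}·z_{i-q+1} + c^{min}·z_{i-q}:
Σ_{i=1}^n |x_i - x_i^q| ≤ 5·(Σ_{j≥q-1}|c_j|)·Σ_{i=1}^{n+1}|z_{i-q}|
  + Σ_{i=-∞}^0 |z_{i-q}|·Σ_{j=1}^n |c_{q-i+j}|, as values in [0,∞]. -/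
theorem stmt14
    (n q : ℕ) (hn : 1 ≤ n) (hq : 2 ≤ q)
    (c : ℕ → ℝ) (z : ℤ → ℝ)
    (hc : Summable (fun j : ℕ => |c j|))
    (hz : ∀ i ∈ Finset.Icc (1 : ℤ) (n : ℤ), Summable (fun j : ℕ => |c j| * |z (i - j)|))
    (cmax cmin : ℝ)
    (hcmax : cmax = ⨆ j : ℕ, c (q - 1 + j))
    (hcmin : cmin = ⨅ j : ℕ, c (q - 1 + j))
    (x xq : ℤ → ℝ)
    (hx : ∀ i : ℤ, x i = ∑' j : ℕ, c j * z (i - j))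
    (hxq : ∀ i : ℤ, xq i = (∑ j ∈ Finset.range (q - 1), c j * z (i - j)) +
      cmax * z (i - q + 1) + cmin * z (i - q)) :
    ENNReal.ofReal (∑ i ∈ Finset.Icc (1 : ℤ) (n : ℤ), |x i - xq i|) ≤
      ENNReal.ofReal (5 * (∑' j : ℕ, |c (q - 1 + j)|) *
          ∑ i ∈ Finset.Icc (1 : ℤ) ((n : ℤ) + 1), |z (i - q)|) +
        ∑' m : ℕ, ENNReal.ofReal (|z (-(m : ℤ) - q)| *
          ∑ j ∈ Finset.Icc 1 n, |c (q + m + j)|) := by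
  obtain ⟨r, rfl⟩ : ∃ r, q = r + 1 := ⟨q - 1, by omega⟩
  simp only [Nat.add_sub_cancel] at hcmax hcmin hxq ⊢
  simp only [Nat.cast_add, Nat.cast_one, sub_add_eq_sub_sub] at hxq ⊢
  -- canonical abbreviations
  set S : ℝ := ∑' j : ℕ, |c (r + j)| with hSdef
  set Z : ℝ := ∑ i ∈ Finset.Icc (1 : ℤ) ((n : ℤ) + 1), |z (i - (r : ℤ) - 1)| with hZdef
  set Tf : ℕ → ℝ := fun m => |z (-(m : ℤ) - (r : ℤ) - 1)| * ∑ j ∈ Finset.Icc 1 n, |c (r + 1 + m + j)|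
    with hTfdef
  -- basic summability facts
  have hSs : Summable fun j : ℕ => |c (r + j)| :=
    ((summable_nat_add_iff r).2 hc).congr (fun j => by rw [add_comm])
  have hS0 : (0 : ℝ) ≤ S := tsum_nonneg fun _ => abs_nonneg _
  have hcS : ∀ m : ℕ, |c (r + m)| ≤ S := fun m => Summable.le_tsum hSs m fun _ _ => abs_nonneg _
  have hZ0 : (0 : ℝ) ≤ Z := Finset.sum_nonneg fun _ _ => abs_nonneg _
  -- bounds on cmax, cmin
  have hbddA : BddAbove (Set.range fun j : ℕ => c (r + j)) :=
    ⟨S, by rintro _ ⟨j, rfl⟩; exact (le_abs_self _).trans (hcS j)⟩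
  have hbddB : BddBelow (Set.range fun j : ℕ => c (r + j)) :=
    ⟨-S, by rintro _ ⟨j, rfl⟩; have := hcS j; have := neg_abs_le (c (r + j)); linarith⟩
  have hcmaxS : |cmax| ≤ S := by
    rw [hcmax, abs_le]
    constructor
    · refine le_trans ?_ (le_ciSup hbddA 0)
      have := hcS 0; have := neg_abs_le (c (r + 0)); linarith
    · exact ciSup_le fun j => (le_abs_self _).trans (hcS j)
  have hcminS : |cmin| ≤ S := by
    rw [hcmin, abs_le]
    constructor
    · refine le_ciInf fun j => ?_
      have := hcS j; have := neg_abs_le (c (r + j)); linarith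
    · exact le_trans (ciInf_le hbddB 0) ((le_abs_self _).trans (hcS 0))
  -- summability of the shifted absolute series, for each i ∈ [1, n]
  have hAs : ∀ i ∈ Finset.Icc (1 : ℤ) (n : ℤ),
      Summable fun m : ℕ => |c (r + m)| * |z (i - (r : ℤ) - m)| := by
    intro i hi
    refine ((summable_nat_add_iff (f := fun j : ℕ => |c j| * |z (i - j)|) r).2 (hz i hi)).congr
      fun m => ?_
    rw [add_comm m r]
    congr 2
    push_cast
    ring
  -- pointwise bound
  have tri : ∀ a b : ℝ, |a - b| ≤ |a| + |b| := fun a b => by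
    rw [sub_eq_add_neg]; exact (abs_add_le a (-b)).trans (by rw [abs_neg])
  have hbound : ∀ i ∈ Finset.Icc (1 : ℤ) (n : ℤ),
      |x i - xq i| ≤ (∑' m : ℕ, |c (r + m)| * |z (i - (r : ℤ) - m)|)
        + S * |z (i - (r : ℤ))| + S * |z (i - (r : ℤ) - 1)| := by
    intro i hi
    have hfs : Summable fun j : ℕ => c j * z (i - j) :=
      ((hz i hi).congr fun j => (abs_mul _ _).symm).of_abs
    have hsplit := Summable.sum_add_tsum_nat_add (f := fun j : ℕ => c j * z (i - j)) r hfs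
    have hx' : x i - xq i = (∑' m : ℕ, c (m + r) * z (i - ((m + r : ℕ) : ℤ)))
        - cmax * z (i - (r : ℤ)) - cmin * z (i - (r : ℤ) - 1) := by
      rw [hx, hxq, ← hsplit]
      push_cast
      rw [show i - (r : ℤ) - 1 + 1 = i - (r : ℤ) by ring]
      ring
    have hnorm : Summable fun m : ℕ => ‖c (m + r) * z (i - ((m + r : ℕ) : ℤ))‖ := by
      refine (hAs i hi).congr fun m => ?_
      rw [Real.norm_eq_abs, abs_mul, add_comm m r]
      congr 2
      push_cast
      ring
    have h1 : |∑' m : ℕ, c (m + r) * z (i - ((m + r : ℕ) : ℤ))|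
        ≤ ∑' m : ℕ, |c (r + m)| * |z (i - (r : ℤ) - m)| := by
      calc |∑' m : ℕ, c (m + r) * z (i - ((m + r : ℕ) : ℤ))|
          ≤ ∑' m : ℕ, ‖c (m + r) * z (i - ((m + r : ℕ) : ℤ))‖ := norm_tsum_le_tsum_norm hnorm
        _ = ∑' m : ℕ, |c (r + m)| * |z (i - (r : ℤ) - m)| := by
            refine tsum_congr fun m => ?_
            rw [Real.norm_eq_abs, abs_mul, add_comm m r]
            congr 2
            push_cast
            ring
    calc |x i - xq i|
        ≤ |∑' m : ℕ, c (m + r) * z (i - ((m + r : ℕ) : ℤ))| + |cmax * z (i - (r : ℤ))|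
            + |cmin * z (i - (r : ℤ) - 1)| := by
          rw [hx']
          exact le_trans (tri _ _) (by gcongr; exact tri _ _)
      _ ≤ (∑' m : ℕ, |c (r + m)| * |z (i - (r : ℤ) - m)|)
            + S * |z (i - (r : ℤ))| + S * |z (i - (r : ℤ) - 1)| := by
          rw [abs_mul, abs_mul]
          gcongr <;> first | exact h1 | exact hcmaxS | exact hcminS | positivity
  -- summing the two simple terms
  have h2 : ∑ i ∈ Finset.Icc (1 : ℤ) (n : ℤ), S * |z (i - (r : ℤ) - 1)| ≤ S * Z := by
    rw [← Finset.mul_sum]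
    refine mul_le_mul_of_nonneg_left ?_ hS0
    refine Finset.sum_le_sum_of_subset_of_nonneg
      (Finset.Icc_subset_Icc_right (by linarith)) fun _ _ _ => abs_nonneg _
  have h3 : ∑ i ∈ Finset.Icc (1 : ℤ) (n : ℤ), S * |z (i - (r : ℤ))| ≤ S * Z := by
    rw [← Finset.mul_sum]
    refine mul_le_mul_of_nonneg_left ?_ hS0
    have hmap : ∑ i ∈ Finset.Icc (1 : ℤ) (n : ℤ), |z (i - (r : ℤ))|
        = ∑ i ∈ Finset.Icc (2 : ℤ) ((n : ℤ) + 1), |z (i - (r : ℤ) - 1)| := by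
      rw [show (2 : ℤ) = 1 + 1 from rfl, ← Finset.map_add_right_Icc, Finset.sum_map]
      refine Finset.sum_congr rfl fun i _ => ?_
      simp only [addRightEmbedding_apply]
      congr 1
      ring
    rw [hmap]
    refine Finset.sum_le_sum_of_subset_of_nonneg
      (Finset.Icc_subset_Icc_left (by norm_num)) fun _ _ _ => abs_nonneg _
  -- the main term
  have hsummt : ∀ t ∈ Finset.range n,
      Summable fun m : ℕ => |c (r + m)| * |z ((t : ℤ) + 1 - (r : ℤ) - m)| := by
    intro t ht
    simp only [Finset.mem_range] at ht
    exact hAs ((t : ℤ) + 1) (by simp only [Finset.mem_Icc]; omega)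
  have hmain : ∑ i ∈ Finset.Icc (1 : ℤ) (n : ℤ), (∑' m : ℕ, |c (r + m)| * |z (i - (r : ℤ) - m)|)
      ≤ S * Z + ∑' m : ℕ, Tf m := by
    have hsplit : ∀ t ∈ Finset.range n,
        (∑' m : ℕ, |c (r + m)| * |z ((t : ℤ) + 1 - (r : ℤ) - m)|)
        = (∑ m ∈ Finset.range (t + 2), |c (r + m)| * |z ((t : ℤ) + 1 - (r : ℤ) - m)|)
          + ∑' m : ℕ, |c (r + (m + (t + 2)))|
              * |z ((t : ℤ) + 1 - (r : ℤ) - ((m + (t + 2) : ℕ) : ℤ))| :=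
      fun t ht => (Summable.sum_add_tsum_nat_add (t + 2) (hsummt t ht)).symm
    have htail : ∑ t ∈ Finset.range n, (∑' m : ℕ, |c (r + (m + (t + 2)))|
          * |z ((t : ℤ) + 1 - (r : ℤ) - ((m + (t + 2) : ℕ) : ℤ))|)
        = ∑' m : ℕ, Tf m := by
      have hsum : ∀ t ∈ Finset.range n, Summable fun m : ℕ => |c (r + (m + (t + 2)))|
          * |z ((t : ℤ) + 1 - (r : ℤ) - ((m + (t + 2) : ℕ) : ℤ))| := fun t ht =>
        ((summable_nat_add_iff (t + 2)).2 (hsummt t ht)).congr fun m => rfl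
      rw [← Summable.tsum_finsetSum hsum]
      refine tsum_congr fun m => ?_
      rw [hTfdef]
      dsimp only
      rw [Finset.mul_sum, ← Finset.Ico_add_one_right_eq_Icc, Finset.sum_Ico_eq_sum_range,
        Nat.add_sub_cancel]
      refine Finset.sum_congr rfl fun t _ => ?_
      rw [mul_comm,
        show ((t : ℤ) + 1 - (r : ℤ) - ((m + (t + 2) : ℕ) : ℤ)) = -(m : ℤ) - (r : ℤ) - 1 by
          push_cast; ring,
        show r + (m + (t + 2)) = r + 1 + m + (1 + t) from by omega]
    have hpre : ∑ t ∈ Finset.range n,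
        ∑ m ∈ Finset.range (t + 2), |c (r + m)| * |z ((t : ℤ) + 1 - (r : ℤ) - m)| ≤ S * Z := by
      have hrefl : ∀ t ∈ Finset.range n,
          ∑ m ∈ Finset.range (t + 2), |c (r + m)| * |z ((t : ℤ) + 1 - (r : ℤ) - m)|
          = ∑ k ∈ Finset.range (t + 2), |c (r + (t + 1 - k))| * |z ((k : ℤ) - (r : ℤ))| := by
        intro t ht
        rw [← Finset.sum_range_reflect]
        refine Finset.sum_congr rfl fun k hk => ?_
        simp only [Finset.mem_range] at hk
        rw [show t + 2 - 1 - k = t + 1 - k from by omega,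
          show ((t : ℤ) + 1 - (r : ℤ) - ((t + 1 - k : ℕ) : ℤ)) = (k : ℤ) - (r : ℤ) from by omega]
      calc ∑ t ∈ Finset.range n,
            ∑ m ∈ Finset.range (t + 2), |c (r + m)| * |z ((t : ℤ) + 1 - (r : ℤ) - m)|
          = ∑ t ∈ Finset.range n,
            ∑ k ∈ Finset.range (t + 2), |c (r + (t + 1 - k))| * |z ((k : ℤ) - (r : ℤ))| :=
            Finset.sum_congr rfl hrefl
        _ = ∑ k ∈ Finset.range (n + 1), ∑ t ∈ Finset.Ico (k - 1) n,
              |c (r + (t + 1 - k))| * |z ((k : ℤ) - (r : ℤ))| :=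
            Finset.sum_comm' (by intro a b; simp only [Finset.mem_range, Finset.mem_Ico]; omega)
        _ ≤ ∑ k ∈ Finset.range (n + 1), S * |z ((k : ℤ) - (r : ℤ))| := by
            refine Finset.sum_le_sum fun k _ => ?_
            rw [← Finset.sum_mul]
            refine mul_le_mul_of_nonneg_right ?_ (abs_nonneg _)
            have hinj : ∀ a ∈ Finset.Ico (k - 1) n, ∀ b ∈ Finset.Ico (k - 1) n,
                a + 1 - k = b + 1 - k → a = b := by
              intro a ha b hb h; simp only [Finset.mem_Ico] at ha hb; omega
            calc ∑ t ∈ Finset.Ico (k - 1) n, |c (r + (t + 1 - k))|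
                = ∑ j ∈ (Finset.Ico (k - 1) n).image (fun t => t + 1 - k), |c (r + j)| :=
                  (Finset.sum_image (f := fun j => |c (r + j)|) hinj).symm
              _ ≤ S := Summable.sum_le_tsum _ (fun _ _ => abs_nonneg _) hSs
        _ = S * Z := by
            rw [← Finset.mul_sum]
            congr 1
            have hZ' : Z = ∑ k ∈ Finset.range (n + 1), |z ((k : ℤ) + 1 - (r : ℤ) - 1)| := by
              rw [hZdef, show ((n : ℤ) + 1) = ((n + 1 : ℕ) : ℤ) from by push_cast; ring,
                sum_Icc_int_eq]
            rw [hZ']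
            exact Finset.sum_congr rfl fun k _ => by congr 1; ring
    calc ∑ i ∈ Finset.Icc (1 : ℤ) (n : ℤ), (∑' m : ℕ, |c (r + m)| * |z (i - (r : ℤ) - m)|)
        = ∑ t ∈ Finset.range n, ∑' m : ℕ, |c (r + m)| * |z ((t : ℤ) + 1 - (r : ℤ) - m)| :=
          sum_Icc_int_eq n _
      _ = ∑ t ∈ Finset.range n,
            ((∑ m ∈ Finset.range (t + 2), |c (r + m)| * |z ((t : ℤ) + 1 - (r : ℤ) - m)|)
            + ∑' m : ℕ, |c (r + (m + (t + 2)))|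
                * |z ((t : ℤ) + 1 - (r : ℤ) - ((m + (t + 2) : ℕ) : ℤ))|) :=
          Finset.sum_congr rfl hsplit
      _ = (∑ t ∈ Finset.range n,
            ∑ m ∈ Finset.range (t + 2), |c (r + m)| * |z ((t : ℤ) + 1 - (r : ℤ) - m)|)
          + ∑ t ∈ Finset.range n, (∑' m : ℕ, |c (r + (m + (t + 2)))|
              * |z ((t : ℤ) + 1 - (r : ℤ) - ((m + (t + 2) : ℕ) : ℤ))|) :=
          Finset.sum_add_distrib
      _ ≤ S * Z + ∑' m : ℕ, Tf m := add_le_add hpre (le_of_eq htail)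
  -- summability of Tf
  have hTfnn : ∀ m : ℕ, 0 ≤ Tf m := fun m =>
    mul_nonneg (abs_nonneg _) (Finset.sum_nonneg fun _ _ => abs_nonneg _)
  have hTfs : Summable Tf := by
    have hterm : ∀ j ∈ Finset.Icc 1 n,
        Summable fun m : ℕ => |z (-(m : ℤ) - (r : ℤ) - 1)| * |c (r + 1 + m + j)| := by
      intro j hj
      have hj' : 1 ≤ j ∧ j ≤ n := by simpa using hj
      have hjz : (j : ℤ) ∈ Finset.Icc (1 : ℤ) (n : ℤ) := by
        simp only [Finset.mem_Icc]; exact_mod_cast hj'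
      refine ((summable_nat_add_iff (f := fun k : ℕ => |c k| * |z ((j : ℤ) - k)|) (r + 1 + j)).2
        (hz j hjz)).congr fun m => ?_
      rw [mul_comm,
        show (j : ℤ) - ((m + (r + 1 + j) : ℕ) : ℤ) = -(m : ℤ) - (r : ℤ) - 1 by push_cast; ring,
        show m + (r + 1 + j) = r + 1 + m + j from by omega]
    refine (summable_sum hterm).congr fun m => ?_
    rw [hTfdef, ← Finset.mul_sum]
  -- assembling the real inequality
  have key : ∑ i ∈ Finset.Icc (1 : ℤ) (n : ℤ), |x i - xq i| ≤ 5 * S * Z + ∑' m : ℕ, Tf m := by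
    have step := Finset.sum_le_sum hbound
    rw [Finset.sum_add_distrib, Finset.sum_add_distrib] at step
    nlinarith [step, hmain, h2, h3, mul_nonneg hS0 hZ0]
  -- conversion to ENNReal
  calc ENNReal.ofReal (∑ i ∈ Finset.Icc (1 : ℤ) (n : ℤ), |x i - xq i|)
      ≤ ENNReal.ofReal (5 * S * Z + ∑' m : ℕ, Tf m) := ENNReal.ofReal_le_ofReal key
    _ ≤ ENNReal.ofReal (5 * S * Z) + ENNReal.ofReal (∑' m : ℕ, Tf m) := ENNReal.ofReal_add_le
    _ = ENNReal.ofReal (5 * S * Z) + ∑' m : ℕ, ENNReal.ofReal (Tf m) := by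
        rw [ENNReal.ofReal_tsum_of_nonneg hTfnn hTfs]
end

section
/- Let (Z_i)_{i∈ℤ} be an i.i.d. sequence of real random variables and let (B_j)_{j≥0} be nonnegative random variables, independent of (Z_i)_{i∈ℤ}, with Σ_{j≥0} E[B_j] < ∞. Fix n ∈ ℕ, a > 0, ε > 0 and φ > 1, and set Z_j^≤ = (Z_j/a)·1_{{|Z_j| ≤ a}} for j ∈ ℤ. Then P( max_{1≤i≤n} |Σ_{j≥0} B_j·Z_{i−j}^≤| > ε ) ≤ ( 1 + ε^{−φ}·n·E[(|Z_1|/a)^φ·1_{{|Z_1| ≤ a}}] ) · Σ_{j≥0} E[B_j]. -/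
open MeasureTheory ProbabilityTheory Filter
open scoped ENNReal NNReal

/-- Tangent-line/Jensen bound for countable convex combination with total mass ≤ 1. -/
lemma stmt15_jensen {φ : ℝ} (hφ : 1 ≤ φ) (b x : ℕ → ℝ) (hb : ∀ j, 0 ≤ b j)
    (hx0 : ∀ j, 0 ≤ x j) (hx1 : ∀ j, x j ≤ 1) (hsb : Summable b) (hb1 : ∑' j, b j ≤ 1) :
    (∑' j, b j * x j) ^ φ ≤ ∑' j, b j * x j ^ φ := by
  have hφ0 : (0:ℝ) < φ := by linarith
  have hsbx : Summable (fun j => b j * x j) :=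
    Summable.of_nonneg_of_le (fun j => mul_nonneg (hb j) (hx0 j))
      (fun j => mul_le_of_le_one_right (hb j) (hx1 j)) hsb
  have hxφ1 : ∀ j, x j ^ φ ≤ 1 := fun j => Real.rpow_le_one (hx0 j) (hx1 j) hφ0.le
  have hxφ0 : ∀ j, 0 ≤ x j ^ φ := fun j => Real.rpow_nonneg (hx0 j) φ
  have hsbxφ : Summable (fun j => b j * x j ^ φ) :=
    Summable.of_nonneg_of_le (fun j => mul_nonneg (hb j) (hxφ0 j))
      (fun j => mul_le_of_le_one_right (hb j) (hxφ1 j)) hsb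
  set s := ∑' j, b j * x j with hs
  have hs0 : 0 ≤ s := tsum_nonneg (fun j => mul_nonneg (hb j) (hx0 j))
  rcases hs0.eq_or_lt with h0 | h0
  · rw [← h0, Real.zero_rpow (ne_of_gt hφ0)]
    exact tsum_nonneg (fun j => mul_nonneg (hb j) (hxφ0 j))
  · have hsφpos : 0 < s ^ φ := Real.rpow_pos_of_pos h0 φ
    have tangent : ∀ j, s ^ φ * (1 + φ * (x j / s - 1)) ≤ x j ^ φ := by
      intro j
      have hm1 : (-1:ℝ) ≤ x j / s - 1 := by
        have : 0 ≤ x j / s := div_nonneg (hx0 j) hs0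
        linarith
      have hber := one_add_mul_self_le_rpow_one_add hm1 hφ
      have h1 : (1 + (x j / s - 1)) = x j / s := by ring
      rw [h1, Real.div_rpow (hx0 j) hs0] at hber
      calc s ^ φ * (1 + φ * (x j / s - 1)) ≤ s ^ φ * (x j ^ φ / s ^ φ) := by
            exact mul_le_mul_of_nonneg_left hber hsφpos.le
        _ = x j ^ φ := by field_simp
    have key : ∀ j, (s ^ φ * (1 - φ)) * b j + (s ^ φ * φ / s) * (b j * x j)
        ≤ b j * x j ^ φ := by
      intro j
      have := mul_le_mul_of_nonneg_left (tangent j) (hb j)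
      calc (s ^ φ * (1 - φ)) * b j + (s ^ φ * φ / s) * (b j * x j)
          = b j * (s ^ φ * (1 + φ * (x j / s - 1))) := by field_simp; ring
        _ ≤ b j * x j ^ φ := this
    have hsum_lhs : Summable (fun j => (s ^ φ * (1 - φ)) * b j
        + (s ^ φ * φ / s) * (b j * x j)) := (hsb.mul_left _).add (hsbx.mul_left _)
    have hts : (∑' j, ((s ^ φ * (1 - φ)) * b j + (s ^ φ * φ / s) * (b j * x j)))
        = (s ^ φ * (1 - φ)) * (∑' j, b j) + (s ^ φ * φ / s) * s := by
      rw [Summable.tsum_add (hsb.mul_left _) (hsbx.mul_left _), tsum_mul_left, tsum_mul_left]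
    have h2 : s ^ φ ≤ (s ^ φ * (1 - φ)) * (∑' j, b j) + (s ^ φ * φ / s) * s := by
      have hB0 : 0 ≤ ∑' j, b j := tsum_nonneg hb
      have : (s ^ φ * φ / s) * s = s ^ φ * φ := by field_simp
      rw [this]
      nlinarith [mul_le_mul_of_nonneg_left hb1 hsφpos.le]
    calc s ^ φ ≤ ∑' j, ((s ^ φ * (1 - φ)) * b j + (s ^ φ * φ / s) * (b j * x j)) := by
          rw [hts]; exact h2
      _ ≤ ∑' j, b j * x j ^ φ := Summable.tsum_le_tsum key hsum_lhs hsbxφ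

lemma stmt15_markov {Ω : Type*} [MeasurableSpace Ω] (P : Measure Ω) {F : Ω → ℝ≥0∞}
    (hF : AEMeasurable F P) {c : ℝ≥0∞} (hc0 : c ≠ 0) (hcT : c ≠ ⊤) {A : Set Ω}
    (hA : A ⊆ {ω | c ≤ F ω}) : P A ≤ c⁻¹ * ∫⁻ ω, F ω ∂P := by
  have h1 : c * P A ≤ ∫⁻ ω, F ω ∂P :=
    le_trans (mul_le_mul_right (measure_mono hA) c) (mul_meas_ge_le_lintegral₀ hF c)
  calc P A = c⁻¹ * (c * P A) := by
        rw [← mul_assoc, ENNReal.inv_mul_cancel hc0 hcT, one_mul]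
    _ ≤ c⁻¹ * ∫⁻ ω, F ω ∂P := mul_le_mul_right h1 _

/-- For (Z_i) i.i.d., (B_j) nonnegative, independent of (Z_i), with
Σ_j E[B_j] < ∞, a > 0, ε > 0, φ > 1 and Z_j^≤ = (Z_j/a)·1_{|Z_j| ≤ a}:
P( max_{1≤i≤n} |Σ_j B_j·Z_{i-j}^≤| > ε )
  ≤ (1 + ε^{-φ}·n·E[(|Z_1|/a)^φ·1_{|Z_1| ≤ a}])·Σ_j E[B_j]. -/
theorem stmt15
    {Ω : Type*} [MeasurableSpace Ω] (P : Measure Ω) [IsProbabilityMeasure P]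
    (Z : ℤ → Ω → ℝ) (hZmeas : ∀ i, Measurable (Z i))
    (hZindep : iIndepFun Z P)
    (hZident : ∀ i, IdentDistrib (Z i) (Z 1) P P)
    (B : ℕ → Ω → ℝ) (hBmeas : ∀ j, Measurable (B j)) (hBnonneg : ∀ j ω, 0 ≤ B j ω)
    (hBZindep : Indep (⨆ j : ℕ, MeasurableSpace.comap (B j) Real.measurableSpace)
      (⨆ i, MeasurableSpace.comap (Z i) Real.measurableSpace) P)
    (hBint : ∀ j, Integrable (B j) P)
    (hBsum : Summable (fun j : ℕ => ∫ ω, B j ω ∂P))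
    (n : ℕ) (a ε φ : ℝ) (ha : 0 < a) (hε : 0 < ε) (hφ : 1 < φ) :
    (P {ω | ∃ i ∈ Finset.Icc (1 : ℤ) (n : ℤ),
        ε < |∑' j : ℕ, B j ω *
          (if |Z (i - j) ω| ≤ a then Z (i - j) ω / a else 0)|}).toReal ≤
      (1 + ε ^ (-φ) * n * ∫ ω in {ω | |Z 1 ω| ≤ a}, (|Z 1 ω| / a) ^ φ ∂P) *
        ∑' j : ℕ, ∫ ω, B j ω ∂P := by
  classical
  have hφ0 : (0:ℝ) < φ := lt_trans one_pos hφ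
  -- the truncation functions
  set g : ℝ → ℝ := fun z => if |z| ≤ a then z / a else 0 with hgdef
  set h : ℝ → ℝ := fun z => if |z| ≤ a then (|z| / a) ^ φ else 0 with hhdef
  have hsetZ : MeasurableSet {z : ℝ | |z| ≤ a} :=
    measurableSet_le (measurable_id.abs) measurable_const
  have hgmeas : Measurable g :=
    Measurable.ite hsetZ (measurable_id.div_const a) measurable_const
  have hhmeas : Measurable h :=
    Measurable.ite hsetZ ((Real.continuous_rpow_const hφ0.le).measurable.comp (measurable_id.abs.div_const a)) measurable_const
  have hg1 : ∀ z, |g z| ≤ 1 := by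
    intro z
    simp only [hgdef]
    split_ifs with hz
    · rw [abs_div, abs_of_pos ha, div_le_one ha]; exact hz
    · simp
  have hg0 : ∀ z, 0 ≤ |g z| := fun z => abs_nonneg _
  have hgh : ∀ z, |g z| ^ φ = h z := by
    intro z
    simp only [hgdef, hhdef]
    split_ifs with hz
    · rw [abs_div, abs_of_pos ha]
    · rw [abs_zero, Real.zero_rpow (ne_of_gt hφ0)]
  have hh0 : ∀ z, 0 ≤ h z := fun z => by rw [← hgh]; positivity
  have hh1 : ∀ z, h z ≤ 1 := fun z => by
    rw [← hgh]; exact Real.rpow_le_one (hg0 z) (hg1 z) hφ0.le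
  -- lintegral of B j
  have hBlint : ∀ j, ∫⁻ ω, ENNReal.ofReal (B j ω) ∂P = ENNReal.ofReal (∫ ω, B j ω ∂P) :=
    fun j => (ofReal_integral_eq_lintegral_ofReal (hBint j)
      (Filter.Eventually.of_forall (hBnonneg j))).symm
  set Sb : ℝ := ∑' j, ∫ ω, B j ω ∂P with hSbdef
  have hSb0 : 0 ≤ Sb := tsum_nonneg (fun j => integral_nonneg (hBnonneg j))
  have hSB : ∑' j, ∫⁻ ω, ENNReal.ofReal (B j ω) ∂P = ENNReal.ofReal Sb := by
    rw [hSbdef, ENNReal.ofReal_tsum_of_nonneg (fun j => integral_nonneg (hBnonneg j)) hBsum]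
    exact tsum_congr hBlint
  -- T and F
  set T : Ω → ℝ≥0∞ := fun ω => ∑' j, ENNReal.ofReal (B j ω) with hTdef
  have hTmeas : Measurable T :=
    Measurable.ennreal_tsum (fun j => ENNReal.measurable_ofReal.comp (hBmeas j))
  set F : ℤ → Ω → ℝ≥0∞ := fun i ω =>
    ∑' j, ENNReal.ofReal (B j ω) * ENNReal.ofReal (h (Z (i - j) ω)) with hFdef
  have hFmeas : ∀ i, Measurable (F i) := fun i =>
    Measurable.ennreal_tsum (fun j => ((ENNReal.measurable_ofReal.comp (hBmeas j)).mul
      (ENNReal.measurable_ofReal.comp (hhmeas.comp (hZmeas (i - j))))))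
  have hBmeasEN : ∀ j : ℕ, Measurable (fun ω => ENNReal.ofReal (B j ω)) :=
    fun j => ENNReal.measurable_ofReal.comp (hBmeas j)
  have hhZmeasEN : ∀ i : ℤ, Measurable (fun ω => ENNReal.ofReal (h (Z i ω))) :=
    fun i => ENNReal.measurable_ofReal.comp (hhmeas.comp (hZmeas i))
  have hterm_meas : ∀ (i : ℤ) (j : ℕ), Measurable
      (fun ω => ENNReal.ofReal (B j ω) * ENNReal.ofReal (h (Z (i - j) ω))) :=
    fun i j => (hBmeasEN j).mul (hhZmeasEN (i - j))
  set c : ℝ≥0∞ := ENNReal.ofReal (ε ^ φ) with hcdef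
  have hεφpos : 0 < ε ^ φ := Real.rpow_pos_of_pos hε φ
  have hc0 : c ≠ 0 := by simp [hcdef, ENNReal.ofReal_pos.mpr hεφpos, ne_of_gt]
  have hcT : c ≠ ⊤ := ENNReal.ofReal_ne_top
  -- event inclusion
  have hsub : {ω | ∃ i ∈ Finset.Icc (1 : ℤ) (n : ℤ),
        ε < |∑' j : ℕ, B j ω *
          (if |Z (i - j) ω| ≤ a then Z (i - j) ω / a else 0)|} ⊆
      {ω | 1 ≤ T ω} ∪ ⋃ i ∈ Finset.Icc (1 : ℤ) (n : ℤ), {ω | c ≤ F i ω} := by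
    intro ω hω
    obtain ⟨i, hi, hωi⟩ := hω
    rcases le_or_gt 1 (T ω) with hT | hT
    · exact Or.inl hT
    · right
      have hTne : T ω ≠ ⊤ := ne_top_of_lt (lt_trans hT ENNReal.one_lt_top)
      have hsummB : Summable (fun j => B j ω) := by
        have h1 := ENNReal.summable_toReal hTne
        have : (fun j => (ENNReal.ofReal (B j ω)).toReal) = fun j => B j ω := by
          funext j; exact ENNReal.toReal_ofReal (hBnonneg j ω)
        rwa [this] at h1
      have hsumB1 : ∑' j, B j ω ≤ 1 := by
        have h2 : (T ω).toReal ≤ 1 := by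
          have := ENNReal.toReal_mono (by simp) hT.le
          simpa using this
        rw [hTdef] at h2
        rw [ENNReal.tsum_toReal_eq (fun j => ENNReal.ofReal_ne_top)] at h2
        have : (fun j => (ENNReal.ofReal (B j ω)).toReal) = fun j => B j ω := by
          funext j; exact ENNReal.toReal_ofReal (hBnonneg j ω)
        rwa [this] at h2
      set b : ℕ → ℝ := fun j => B j ω with hbdef
      set x : ℕ → ℝ := fun j => |g (Z (i - j) ω)| with hxdef
      have hb : ∀ j, 0 ≤ b j := fun j => hBnonneg j ω
      have hx0' : ∀ j, 0 ≤ x j := fun j => abs_nonneg _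
      have hx1 : ∀ j, x j ≤ 1 := fun j => hg1 _
      have hsumbx : Summable (fun j => b j * x j) :=
        Summable.of_nonneg_of_le (fun j => mul_nonneg (hb j) (hx0' j))
          (fun j => mul_le_of_le_one_right (hb j) (hx1 j)) hsummB
      have hsumbg : Summable (fun j => b j * g (Z (i - j) ω)) := by
        apply Summable.of_norm
        apply Summable.of_nonneg_of_le (fun j => norm_nonneg _) _ hsummB
        intro j
        rw [Real.norm_eq_abs, abs_mul, abs_of_nonneg (hb j)]
        exact mul_le_of_le_one_right (hb j) (hg1 _)
      have habs : |∑' j, b j * g (Z (i - j) ω)| ≤ ∑' j, b j * x j := by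
        calc |∑' j, b j * g (Z (i - j) ω)| ≤ ∑' j, ‖b j * g (Z (i - j) ω)‖ := by
              rw [← Real.norm_eq_abs]
              exact norm_tsum_le_tsum_norm hsumbg.norm
          _ = ∑' j, b j * x j := by
              apply tsum_congr; intro j
              rw [Real.norm_eq_abs, abs_mul, abs_of_nonneg (hb j)]
      have hεs : ε < ∑' j, b j * x j := lt_of_lt_of_le hωi habs
      have hjen := stmt15_jensen hφ.le b x hb hx0' hx1 hsummB hsumB1
      have hεφle : ε ^ φ ≤ ∑' j, b j * x j ^ φ :=
        le_trans (Real.rpow_le_rpow hε.le hεs.le hφ0.le) hjen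
      have hxh : ∀ j, b j * x j ^ φ = b j * h (Z (i - j) ω) := by
        intro j
        have hx : x j = |g (Z (i - ↑j) ω)| := rfl
        rw [hx, hgh]
      rw [tsum_congr hxh] at hεφle
      have hsumbh : Summable (fun j => b j * h (Z (i - j) ω)) :=
        Summable.of_nonneg_of_le (fun j => mul_nonneg (hb j) (hh0 _))
          (fun j => mul_le_of_le_one_right (hb j) (hh1 _)) hsummB
      refine Set.mem_biUnion hi ?_
      show c ≤ F i ω
      calc c ≤ ENNReal.ofReal (∑' j, b j * h (Z (i - j) ω)) :=
            ENNReal.ofReal_le_ofReal hεφle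
        _ = ∑' j, ENNReal.ofReal (b j * h (Z (i - j) ω)) :=
            ENNReal.ofReal_tsum_of_nonneg (fun j => mul_nonneg (hb j) (hh0 _)) hsumbh
        _ = F i ω := by
            apply tsum_congr; intro j
            rw [ENNReal.ofReal_mul (hb j)]
  -- independence
  have hindep : ∀ (j : ℕ) (i : ℤ), IndepFun (B j) (Z i) P := by
    intro j i
    exact indep_of_indep_of_le_right
      (indep_of_indep_of_le_left hBZindep
        (le_iSup (fun j => MeasurableSpace.comap (B j) Real.measurableSpace) j))
      (le_iSup (fun i => MeasurableSpace.comap (Z i) Real.measurableSpace) i)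
  -- the Z-integral
  set Ih : ℝ≥0∞ := ∫⁻ ω, ENNReal.ofReal (h (Z 1 ω)) ∂P with hIhdef
  have haeZ : AEStronglyMeasurable (fun ω => h (Z 1 ω)) P :=
    (hhmeas.comp (hZmeas 1)).aestronglyMeasurable
  have hZint : Integrable (fun ω => h (Z 1 ω)) P := by
    apply (integrable_const (1:ℝ)).mono' haeZ
    apply Filter.Eventually.of_forall
    intro ω
    rw [Real.norm_eq_abs, abs_of_nonneg (hh0 _)]
    exact hh1 _
  have hIφ0 : 0 ≤ ∫ ω, h (Z 1 ω) ∂P := integral_nonneg (fun ω => hh0 _)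
  have hIh : Ih = ENNReal.ofReal (∫ ω, h (Z 1 ω) ∂P) :=
    (ofReal_integral_eq_lintegral_ofReal hZint
      (Filter.Eventually.of_forall (fun ω => hh0 _))).symm
  -- set integral equals ∫ h (Z 1)
  have hsetint : ∫ ω in {ω | |Z 1 ω| ≤ a}, (|Z 1 ω| / a) ^ φ ∂P = ∫ ω, h (Z 1 ω) ∂P := by
    have hms : MeasurableSet {ω | |Z 1 ω| ≤ a} :=
      measurableSet_le (hZmeas 1).abs measurable_const
    rw [← integral_indicator hms]
    apply integral_congr_ae
    apply Filter.Eventually.of_forall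
    intro ω
    simp only [Set.indicator_apply, Set.mem_setOf_eq, hhdef]
  -- lintegral of F i
  have hFint : ∀ i, ∫⁻ ω, F i ω ∂P = Ih * ENNReal.ofReal Sb := by
    intro i
    rw [hFdef]
    simp only
    rw [lintegral_tsum (fun j => (hterm_meas i j).aemeasurable)]
    have hterm : ∀ j : ℕ, ∫⁻ ω, ENNReal.ofReal (B j ω) *
        ENNReal.ofReal (h (Z (i - j) ω)) ∂P =
        (∫⁻ ω, ENNReal.ofReal (B j ω) ∂P) * Ih := by
      intro j
      have hIF : IndepFun (fun ω => ENNReal.ofReal (B j ω))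
          (fun ω => ENNReal.ofReal (h (Z (i - j) ω))) P :=
        (hindep j (i - j)).comp ENNReal.measurable_ofReal
          (ENNReal.measurable_ofReal.comp hhmeas)
      rw [lintegral_mul_eq_lintegral_mul_lintegral_of_indepFun''
        (hBmeasEN j).aemeasurable (hhZmeasEN (i - j)).aemeasurable hIF]
      congr 1
      have hID : IdentDistrib (fun ω => ENNReal.ofReal (h (Z (i - j) ω)))
          (fun ω => ENNReal.ofReal (h (Z 1 ω))) P P :=
        (hZident (i - j)).comp (ENNReal.measurable_ofReal.comp hhmeas)
      exact hID.lintegral_eq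
    rw [tsum_congr hterm, ENNReal.tsum_mul_right, hSB, mul_comm]
  -- measure bound
  have hmb : P {ω | ∃ i ∈ Finset.Icc (1 : ℤ) (n : ℤ),
        ε < |∑' j : ℕ, B j ω *
          (if |Z (i - j) ω| ≤ a then Z (i - j) ω / a else 0)|} ≤
      ENNReal.ofReal Sb + n * (c⁻¹ * (Ih * ENNReal.ofReal Sb)) := by
    refine le_trans (measure_mono hsub) (le_trans (measure_union_le _ _) ?_)
    gcongr
    · -- P {1 ≤ T} ≤ ofReal Sb
      have h1 := mul_meas_ge_le_lintegral₀ (μ := P) hTmeas.aemeasurable 1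
      rw [one_mul] at h1
      refine le_trans h1 ?_
      rw [hTdef]
      simp only
      rw [lintegral_tsum (fun j => (hBmeasEN j).aemeasurable), hSB]
    · -- union bound
      refine le_trans (measure_biUnion_finset_le _ _) ?_
      have hone : ∀ i ∈ Finset.Icc (1 : ℤ) (n : ℤ),
          P {ω | c ≤ F i ω} ≤ c⁻¹ * (Ih * ENNReal.ofReal Sb) := by
        intro i _
        have := stmt15_markov P (hFmeas i).aemeasurable hc0 hcT (le_refl {ω | c ≤ F i ω})
        rwa [hFint i] at this
      refine le_trans (Finset.sum_le_sum hone) ?_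
      rw [Finset.sum_const, nsmul_eq_mul]
      gcongr
      rw [Int.card_Icc]
      simp
  -- convert to the real statement
  have hRHS0 : 0 ≤ (1 + ε ^ (-φ) * n * ∫ ω, h (Z 1 ω) ∂P) * Sb := by
    have h1 : 0 ≤ ε ^ (-φ) := Real.rpow_nonneg hε.le _
    have : 0 ≤ ε ^ (-φ) * n * ∫ ω, h (Z 1 ω) ∂P := by positivity
    nlinarith
  rw [hsetint]
  apply ENNReal.toReal_le_of_le_ofReal hRHS0
  refine le_trans hmb ?_
  -- identify the two ENNReal expressions
  have hcinv : c⁻¹ = ENNReal.ofReal (ε ^ (-φ)) := by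
    rw [hcdef, Real.rpow_neg hε.le, ENNReal.ofReal_inv_of_pos hεφpos]
  rw [hIh, hcinv]
  rw [show (1 + ε ^ (-φ) * n * ∫ ω, h (Z 1 ω) ∂P) * Sb
      = Sb + ε ^ (-φ) * n * (∫ ω, h (Z 1 ω) ∂P) * Sb by ring]
  rw [ENNReal.ofReal_add hSb0 (by positivity)]
  gcongr
  rw [ENNReal.ofReal_mul (by positivity), ENNReal.ofReal_mul (by positivity),
    ENNReal.ofReal_mul (by positivity), ENNReal.ofReal_natCast]
  ring_nf
  exact le_refl _
end
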